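/- arXiv:2107.12035 — 3 statements merged into one kernel-verified Lean document; each statement's English description precedes it below -/
import Mathlib

section
/- (Lemma 2.11, concavity part.) Let n ≥ 2, 2 ≤ k ≤ n, and let β_0,…,β_{k-2} be nonnegative real numbers. Then the function f(λ) = σ_k(λ)/σ_{k-1}(λ) − Σ_{l=0}^{k-2} β_l · σ_l(λ)/σ_{k-1}(λ) is concave on the convex cone Γ_{k-1}. -/
set_option linter.unusedSectionVars false
set_option maxHeartbeats 1000000

open Finset

section EsymmBasics
variable {ι : Type*} [DecidableEq ι]

noncomputable def esymmOn (A : Finset ι) (j : ℕ) (f : ι → ℝ) : ℝ :=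
  ∑ s ∈ Finset.powersetCard j A, ∏ i ∈ s, f i

theorem esymmOn_zero (A : Finset ι) (f : ι → ℝ) : esymmOn A 0 f = 1 := by
  simp [esymmOn]

theorem esymmOn_congr {A : Finset ι} {f g : ι → ℝ} (h : ∀ i ∈ A, f i = g i) (j : ℕ) :
    esymmOn A j f = esymmOn A j g := by
  unfold esymmOn
  refine Finset.sum_congr rfl fun s hs => Finset.prod_congr rfl fun i hi => ?_
  exact h i ((Finset.mem_powersetCard.1 hs).1 hi)

theorem esymmOn_pos {A : Finset ι} {f : ι → ℝ} (hpos : ∀ i ∈ A, 0 < f i) {j : ℕ}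
    (hj : j ≤ A.card) : 0 < esymmOn A j f := by
  unfold esymmOn
  refine Finset.sum_pos (fun s hs => ?_) (Finset.powersetCard_nonempty.2 hj)
  rw [Finset.mem_powersetCard] at hs
  exact Finset.prod_pos fun i hi => hpos i (hs.1 hi)

theorem esymmOn_smul (A : Finset ι) (j : ℕ) (f : ι → ℝ) (c : ℝ) :
    esymmOn A j (fun i => c * f i) = c ^ j * esymmOn A j f := by
  unfold esymmOn
  rw [Finset.mul_sum]
  refine Finset.sum_congr rfl fun s hs => ?_
  rw [Finset.prod_mul_distrib, Finset.prod_const, (Finset.mem_powersetCard.1 hs).2]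

theorem esymmOn_erase {A : Finset ι} {i : ι} (hi : i ∈ A) (j : ℕ) (f : ι → ℝ) :
    esymmOn A (j + 1) f = esymmOn (A.erase i) (j + 1) f + f i * esymmOn (A.erase i) j f := by
  unfold esymmOn
  have h1 : i ∉ A.erase i := Finset.notMem_erase i A
  conv_lhs => rw [← Finset.insert_erase hi]
  rw [Finset.powersetCard_succ_insert h1, Finset.sum_union, Finset.mul_sum]
  · congr 1
    rw [Finset.sum_image ?inj]
    case inj =>
      intro s hs t ht hst
      have hsi : i ∉ s := fun h => h1 ((Finset.mem_powersetCard.1 hs).1 h)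
      have hti : i ∉ t := fun h => h1 ((Finset.mem_powersetCard.1 ht).1 h)
      have := congrArg (Finset.erase · i) hst
      simpa [Finset.erase_insert hsi, Finset.erase_insert hti] using this
    refine Finset.sum_congr rfl fun s hs => ?_
    have hsi : i ∉ s := fun h => h1 ((Finset.mem_powersetCard.1 hs).1 h)
    rw [Finset.prod_insert hsi]
  · rw [Finset.disjoint_left]
    intro s hs hs'
    have hsi : i ∉ s := fun h => h1 ((Finset.mem_powersetCard.1 hs).1 h)
    obtain ⟨t, ht, rfl⟩ := Finset.mem_image.1 hs'
    exact hsi (Finset.mem_insert_self i t)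

theorem esymmOn_weighted_sum (A : Finset ι) (j : ℕ) (f : ι → ℝ) :
    ∑ i ∈ A, f i * esymmOn (A.erase i) j f = (j + 1 : ℝ) * esymmOn A (j + 1) f := by
  unfold esymmOn
  have lhs_eq : ∑ i ∈ A, f i * ∑ s ∈ Finset.powersetCard j (A.erase i), ∏ l ∈ s, f l
      = ∑ p ∈ A.sigma (fun i => Finset.powersetCard j (A.erase i)), ∏ l ∈ insert p.1 p.2, f l := by
    rw [Finset.sum_sigma]
    refine Finset.sum_congr rfl fun i hi => ?_
    rw [Finset.mul_sum]
    refine Finset.sum_congr rfl fun s hs => ?_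
    have hsi : i ∉ s := fun h =>
      Finset.notMem_erase i A ((Finset.mem_powersetCard.1 hs).1 h)
    rw [Finset.prod_insert hsi]
  have rhs_eq : ((j : ℝ) + 1) * ∑ t ∈ Finset.powersetCard (j + 1) A, ∏ l ∈ t, f l
      = ∑ p ∈ (Finset.powersetCard (j + 1) A).sigma (fun t => t), ∏ l ∈ p.1, f l := by
    rw [Finset.sum_sigma, Finset.mul_sum]
    refine Finset.sum_congr rfl fun t ht => ?_
    rw [show (∑ s ∈ t, ∏ l ∈ (⟨t, s⟩ : Σ _ : Finset ι, ι).fst, f l)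
        = ∑ _s ∈ t, ∏ l ∈ t, f l from rfl, Finset.sum_const,
      (Finset.mem_powersetCard.1 ht).2, nsmul_eq_mul]
    push_cast
    ring
  rw [lhs_eq]
  rw [rhs_eq]
  refine Finset.sum_nbij' (fun p => ⟨insert p.1 p.2, p.1⟩) (fun q => ⟨q.2, q.1.erase q.2⟩)
    ?_ ?_ ?_ ?_ ?_
  · rintro ⟨i, s⟩ hp
    rw [Finset.mem_sigma] at hp ⊢
    obtain ⟨hiA, hs⟩ := hp
    rw [Finset.mem_powersetCard] at hs
    have hsi : i ∉ s := fun h => Finset.notMem_erase i A (hs.1 h)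
    refine ⟨Finset.mem_powersetCard.2 ⟨?_, ?_⟩, Finset.mem_insert_self _ _⟩
    · exact Finset.insert_subset hiA ((hs.1).trans (Finset.erase_subset i A))
    · rw [Finset.card_insert_of_notMem hsi, hs.2]
  · rintro ⟨t, i⟩ hq
    rw [Finset.mem_sigma] at hq ⊢
    obtain ⟨ht, hit⟩ := hq
    rw [Finset.mem_powersetCard] at ht
    refine ⟨ht.1 hit, Finset.mem_powersetCard.2 ⟨?_, ?_⟩⟩
    · intro l hl
      rw [Finset.mem_erase] at hl ⊢
      exact ⟨hl.1, ht.1 hl.2⟩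
    · rw [Finset.card_erase_of_mem hit, ht.2]
      omega
  · rintro ⟨i, s⟩ hp
    rw [Finset.mem_sigma] at hp
    have hsi : i ∉ s := fun h =>
      Finset.notMem_erase i A ((Finset.mem_powersetCard.1 hp.2).1 h)
    simp [Finset.erase_insert hsi]
  · rintro ⟨t, i⟩ hq
    rw [Finset.mem_sigma] at hq
    simp [Finset.insert_erase hq.2]
  · rintro ⟨i, s⟩ hp
    rfl

theorem sum_powersetCard_compl [Fintype ι] (j : ℕ) (hj : j ≤ Fintype.card ι)
    (F : Finset ι → ℝ) :
    ∑ s ∈ Finset.powersetCard j (univ : Finset ι), F s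
      = ∑ s ∈ Finset.powersetCard (Fintype.card ι - j) (univ : Finset ι), F sᶜ := by
  refine Finset.sum_nbij' (fun s => sᶜ) (fun s => sᶜ) ?_ ?_ ?_ ?_ ?_
  · intro s hs
    rw [Finset.mem_powersetCard] at hs ⊢
    refine ⟨Finset.subset_univ _, ?_⟩
    rw [Finset.card_compl, hs.2]
  · intro s hs
    rw [Finset.mem_powersetCard] at hs ⊢
    refine ⟨Finset.subset_univ _, ?_⟩
    rw [Finset.card_compl, hs.2]
    omega
  · intro s _; exact compl_compl s
  · intro s _; exact compl_compl s
  · intro s _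
    rw [compl_compl]

theorem newton_top_sos (e : ℕ) (y : Fin (e + 2) → ℝ) :
    2 * esymmOn (univ : Finset (Fin (e + 2))) (e + 2) y * esymmOn univ e y
      ≤ esymmOn (univ : Finset (Fin (e + 2))) (e + 1) y ^ 2 := by
  have hcard : Fintype.card (Fin (e + 2)) = e + 2 := Fintype.card_fin _
  set a : Fin (e + 2) → ℝ := fun i => ∏ l ∈ univ.erase i, y l with ha
  -- step 1 : esymmOn univ (e+1) y = ∑ i, a i
  have st1 : esymmOn (univ : Finset (Fin (e + 2))) (e + 1) y = ∑ i, a i := by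
    unfold esymmOn
    rw [sum_powersetCard_compl (e + 1) (by omega) (fun s => ∏ i ∈ s, y i)]
    have h1 : Fintype.card (Fin (e + 2)) - (e + 1) = 1 := by omega
    rw [h1]
    rw [show Finset.powersetCard 1 (univ : Finset (Fin (e + 2))) = univ.image (fun i => {i}) from ?_]
    · rw [Finset.sum_image (fun i _ j _ h => Finset.singleton_injective h)]
      refine Finset.sum_congr rfl fun i _ => ?_
      congr 1
      rw [Finset.compl_eq_univ_sdiff, Finset.sdiff_singleton_eq_erase]
    · ext s
      simp only [Finset.mem_powersetCard, Finset.mem_image]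
      constructor
      · rintro ⟨-, hc⟩
        obtain ⟨i, rfl⟩ := Finset.card_eq_one.1 hc
        exact ⟨i, Finset.mem_univ i, rfl⟩
      · rintro ⟨i, -, rfl⟩
        exact ⟨Finset.subset_univ _, Finset.card_singleton i⟩
  -- step 4 : ∑ over offDiag of the complement-products is 2 * esymmOn univ e y
  have st4 : ∑ p ∈ (univ : Finset (Fin (e + 2))).offDiag, ∏ l ∈ ({p.1, p.2} : Finset (Fin (e + 2)))ᶜ, y l
      = 2 * esymmOn univ e y := by
    unfold esymmOn
    rw [sum_powersetCard_compl e (by omega) (fun s => ∏ i ∈ s, y i)]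
    have h2 : Fintype.card (Fin (e + 2)) - e = 2 := by omega
    rw [h2, Finset.mul_sum]
    have hconst : ∀ s ∈ Finset.powersetCard 2 (univ : Finset (Fin (e + 2))),
        2 * ∏ i ∈ sᶜ, y i = ∑ p ∈ s.offDiag, ∏ i ∈ sᶜ, y i := by
      intro s hs
      rw [Finset.sum_const]
      rw [Finset.offDiag_card, (Finset.mem_powersetCard.1 hs).2]
      norm_num [nsmul_eq_mul]
    rw [Finset.sum_congr rfl hconst, Finset.sum_sigma']
    refine (Finset.sum_nbij' (fun q => (q.2 : Fin (e + 2) × Fin (e + 2)))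
      (fun p => (⟨{p.1, p.2}, p⟩ : Σ _s : Finset (Fin (e + 2)), Fin (e + 2) × Fin (e + 2))) ?_ ?_ ?_ ?_ ?_).symm
    · rintro ⟨s, p⟩ hq
      rw [Finset.mem_sigma] at hq
      obtain ⟨hs, hp⟩ := hq
      rw [Finset.mem_offDiag] at hp
      exact Finset.mem_offDiag.2 ⟨Finset.mem_univ _, Finset.mem_univ _, hp.2.2⟩
    · rintro p hp
      rw [Finset.mem_offDiag] at hp
      rw [Finset.mem_sigma]
      constructor
      · rw [Finset.mem_powersetCard]
        refine ⟨Finset.subset_univ _, ?_⟩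
        rw [Finset.card_insert_of_notMem (by simp [hp.2.2]), Finset.card_singleton]
      · exact Finset.mem_offDiag.2 ⟨Finset.mem_insert_self _ _,
          Finset.mem_insert_of_mem (Finset.mem_singleton_self _), hp.2.2⟩
    · rintro ⟨s, p⟩ hq
      rw [Finset.mem_sigma] at hq
      obtain ⟨hs, hp⟩ := hq
      rw [Finset.mem_offDiag] at hp
      have hsub : ({p.1, p.2} : Finset (Fin (e + 2))) ⊆ s := by
        intro l hl
        rcases Finset.mem_insert.1 hl with h | h
        · exact h ▸ hp.1
        · exact (Finset.mem_singleton.1 h) ▸ hp.2.1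
      have hcard2 : s.card ≤ ({p.1, p.2} : Finset (Fin (e + 2))).card := by
        rw [(Finset.mem_powersetCard.1 hs).2,
          Finset.card_insert_of_notMem (by simp [hp.2.2]), Finset.card_singleton]
      have heq : ({p.1, p.2} : Finset (Fin (e + 2))) = s := Finset.eq_of_subset_of_card_le hsub hcard2
      subst heq
      rfl
    · rintro p _
      rfl
    · rintro ⟨s, p⟩ hq
      rw [Finset.mem_sigma] at hq
      obtain ⟨hs, hp⟩ := hq
      rw [Finset.mem_offDiag] at hp
      have hsub : ({p.1, p.2} : Finset (Fin (e + 2))) ⊆ s := by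
        intro l hl
        rcases Finset.mem_insert.1 hl with h | h
        · exact h ▸ hp.1
        · exact (Finset.mem_singleton.1 h) ▸ hp.2.1
      have hcard2 : s.card ≤ ({p.1, p.2} : Finset (Fin (e + 2))).card := by
        rw [(Finset.mem_powersetCard.1 hs).2,
          Finset.card_insert_of_notMem (by simp [hp.2.2]), Finset.card_singleton]
      have he : ({p.1, p.2} : Finset (Fin (e + 2))) = s := Finset.eq_of_subset_of_card_le hsub hcard2
      rw [he]
  -- step: esymmOn univ (e+2) y = ∏ over univ
  have sttop : esymmOn (univ : Finset (Fin (e + 2))) (e + 2) y = ∏ l, y l := by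
    unfold esymmOn
    have : Finset.powersetCard (e + 2) (univ : Finset (Fin (e + 2))) = {univ} := by
      have := Finset.powersetCard_self (univ : Finset (Fin (e + 2)))
      rwa [Finset.card_univ, hcard] at this
    rw [this, Finset.sum_singleton]
  -- step 3 : a i * a j = (∏ y) * ∏ over complement of pair
  have st3 : ∀ p ∈ (univ : Finset (Fin (e + 2))).offDiag,
      a p.1 * a p.2 = (∏ l, y l) * ∏ l ∈ ({p.1, p.2} : Finset (Fin (e + 2)))ᶜ, y l := by
    rintro ⟨i, j⟩ hp
    rw [Finset.mem_offDiag] at hp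
    have hij : i ≠ j := hp.2.2
    have hunion : (univ.erase i) ∪ (univ.erase j) = (univ : Finset (Fin (e + 2))) := by
      ext l
      simp only [Finset.mem_union, Finset.mem_erase, Finset.mem_univ, and_true, iff_true]
      by_cases h : l = i
      · right; rw [h]; exact hij
      · left; exact h
    have hinter : (univ.erase i) ∩ (univ.erase j) = ({i, j} : Finset (Fin (e + 2)))ᶜ := by
      ext l
      simp only [Finset.mem_inter, Finset.mem_erase, Finset.mem_univ, and_true,
        Finset.mem_compl, Finset.mem_insert, Finset.mem_singleton]
      tauto
    have := Finset.prod_union_inter (s₁ := univ.erase i) (s₂ := univ.erase j) (f := y)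
    rw [hunion, hinter] at this
    exact this.symm
  -- step 2 : square expansion
  have st2 : (∑ i, a i) ^ 2 = ∑ i, (a i) ^ 2 + ∑ p ∈ (univ : Finset (Fin (e + 2))).offDiag,
      a p.1 * a p.2 := by
    rw [sq, Finset.sum_mul_sum]
    rw [← Finset.sum_product']
    rw [← Finset.diag_union_offDiag (univ : Finset (Fin (e + 2))),
      Finset.sum_union (Finset.disjoint_diag_offDiag _), Finset.sum_diag]
    simp [sq]
  calc 2 * esymmOn (univ : Finset (Fin (e + 2))) (e + 2) y * esymmOn univ e y
      = (∏ l, y l) * (2 * esymmOn univ e y) := by rw [sttop]; ring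
    _ = (∏ l, y l) * ∑ p ∈ (univ : Finset (Fin (e + 2))).offDiag,
          ∏ l ∈ ({p.1, p.2} : Finset (Fin (e + 2)))ᶜ, y l := by rw [st4]
    _ = ∑ p ∈ (univ : Finset (Fin (e + 2))).offDiag, a p.1 * a p.2 := by
          rw [Finset.mul_sum]
          exact (Finset.sum_congr rfl st3).symm
    _ ≤ ∑ i, (a i) ^ 2 + ∑ p ∈ (univ : Finset (Fin (e + 2))).offDiag, a p.1 * a p.2 := by
          nlinarith [Finset.sum_nonneg (fun i (_ : i ∈ (univ : Finset (Fin (e + 2)))) => sq_nonneg (a i))]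
    _ = esymmOn (univ : Finset (Fin (e + 2))) (e + 1) y ^ 2 := by rw [st1, st2]

end EsymmBasics

section PolyPart
open Polynomial
variable {ι : Type*} [DecidableEq ι]

theorem splits_derivative {p : ℝ[X]} (hp : p.Splits) :
    (derivative p).Splits := by
  by_cases h0 : derivative p = 0
  · rw [h0]; exact Splits.zero
  have hd : p.natDegree ≠ 0 := fun h => h0 (derivative_of_natDegree_zero h)
  have h1 : Multiset.card p.roots = p.natDegree := (splits_iff_card_roots).1 hp
  have h2 := p.card_roots_le_derivative
  have h3 := (derivative p).card_roots'
  have h4 := p.natDegree_derivative_le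
  rw [splits_iff_card_roots]
  omega

theorem natDegree_derivative_eq' {p : ℝ[X]} (hd : p.natDegree ≠ 0) :
    (derivative p).natDegree = p.natDegree - 1 := by
  refine le_antisymm p.natDegree_derivative_le (le_natDegree_of_ne_zero ?_)
  rw [coeff_derivative]
  have h1 : p.natDegree - 1 + 1 = p.natDegree := by omega
  rw [h1]
  have h2 : p.coeff p.natDegree ≠ 0 := by
    rw [← leadingCoeff]
    exact leadingCoeff_ne_zero.2 fun h => hd (by rw [h, natDegree_zero])
  have h3 : ((p.natDegree - 1 : ℕ) : ℝ) + 1 ≠ 0 := by positivity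
  exact mul_ne_zero h2 h3

theorem iterate_derivative_facts {p : ℝ[X]} (hp : p.Splits) (r : ℕ)
    (hr : r ≤ p.natDegree) :
    (derivative^[r] p).Splits ∧ (derivative^[r] p).natDegree
      = p.natDegree - r := by
  induction r with
  | zero => exact ⟨hp, by simp⟩
  | succ s ih =>
    obtain ⟨hs, hdeg⟩ := ih (by omega)
    rw [Function.iterate_succ_apply']
    refine ⟨splits_derivative hs, ?_⟩
    by_cases h0 : p.natDegree - s = 0
    · omega
    · rw [natDegree_derivative_eq' (by omega : (derivative^[s] p).natDegree ≠ 0), hdeg]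
      omega

theorem no_sandwich {ι : Type*} [DecidableEq ι] (B : Finset ι) (f : ι → ℝ) (m : ℕ)
    (hB : m + 2 ≤ B.card) (h0 : 0 < esymmOn B m f) (h1 : esymmOn B (m + 1) f = 0)
    (h2 : 0 < esymmOn B (m + 2) f) : False := by
  set N := B.card with hN
  set P : ℝ[X] := ∏ l ∈ B, (X + C (f l)) with hP
  have hmonic : P.Monic := monic_prod_of_monic _ _ fun l _ => monic_X_add_C (f l)
  have hdegP : P.natDegree = N := by
    rw [hP, natDegree_prod_of_monic _ _ fun l _ => monic_X_add_C (f l)]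
    simp [natDegree_X_add_C, hN]
  have hsplitsP : P.Splits :=
    Splits.prod fun l _ => Splits.of_natDegree_le_one (by rw [natDegree_X_add_C])
  have hcoeffP : ∀ t, t ≤ N → P.coeff t = esymmOn B (N - t) f := fun t ht =>
    Finset.prod_X_add_C_coeff B f ht
  set r := N - (m + 2) with hr
  set D := derivative^[r] P with hD
  obtain ⟨hsplitsD, hdegD'⟩ := iterate_derivative_facts hsplitsP r (by omega)
  rw [hdegP] at hdegD'
  have hdegD : D.natDegree = m + 2 := by rw [hD, hdegD']; omega
  -- coefficients of D
  have hcoeffD : ∀ l, D.coeff l = ((l + r).descFactorial r : ℝ) * P.coeff (l + r) := by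
    intro l
    rw [hD, Polynomial.coeff_iterate_derivative, nsmul_eq_mul]
  have hcpos : ∀ l : ℕ, (0:ℝ) < ((l + r).descFactorial r : ℝ) := by
    intro l
    have hne : (l + r).descFactorial r ≠ 0 := fun h =>
      absurd (Nat.descFactorial_eq_zero_iff_lt.1 h) (by omega)
    exact_mod_cast Nat.pos_of_ne_zero hne
  have e0 : D.coeff 0 = ((0 + r).descFactorial r : ℝ) * esymmOn B (m + 2) f := by
    rw [hcoeffD 0, hcoeffP (0 + r) (by omega)]
    congr 2
    omega
  have e1 : D.coeff 1 = 0 := by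
    rw [hcoeffD 1, hcoeffP (1 + r) (by omega)]
    have : N - (1 + r) = m + 1 := by omega
    rw [this, h1, mul_zero]
  have e2 : D.coeff 2 = ((2 + r).descFactorial r : ℝ) * esymmOn B m f := by
    rw [hcoeffD 2, hcoeffP (2 + r) (by omega)]
    congr 2
    omega
  have etop : D.coeff (m + 2) = ((m + 2 + r).descFactorial r : ℝ) := by
    rw [hcoeffD (m + 2), hcoeffP (m + 2 + r) (by omega)]
    have : N - (m + 2 + r) = 0 := by omega
    rw [this, esymmOn_zero, mul_one]
  have hlc : D.leadingCoeff = ((m + 2 + r).descFactorial r : ℝ) := by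
    rw [leadingCoeff, hdegD, etop]
  have hlcpos : 0 < D.leadingCoeff := by rw [hlc]; exact hcpos (m + 2)
  -- roots of D
  have hroots : Multiset.card D.roots = m + 2 := by
    rw [splits_iff_card_roots.1 hsplitsD, hdegD]
  have hvieta : ∀ k, k ≤ m + 2 → D.coeff k
      = D.leadingCoeff * (-1) ^ (m + 2 - k) * D.roots.esymm (m + 2 - k) := by
    intro k hk
    have := Polynomial.coeff_eq_esymm_roots_of_splits hsplitsD (by omega : k ≤ D.natDegree)
    rwa [hdegD] at this
  -- translate to a Fin function
  set l : List ℝ := D.roots.toList with hldef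
  have hlen : l.length = m + 2 := by rw [hldef, Multiset.length_toList, hroots]
  set y : Fin (m + 2) → ℝ := fun i => l[(i : ℕ)]'(by rw [hlen]; exact i.isLt) with hy
  have hofn : List.ofFn y = l := by
    refine List.ext_getElem (by rw [List.length_ofFn, hlen]) fun i hi1 hi2 => ?_
    rw [List.getElem_ofFn]
  have hmap : (univ : Finset (Fin (m + 2))).val.map y = D.roots := by
    rw [Fin.univ_val_map, hofn, hldef, Multiset.coe_toList]
  have hesymm : ∀ j, esymmOn (univ : Finset (Fin (m + 2))) j y = D.roots.esymm j := by
    intro j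
    rw [← hmap, Finset.esymm_map_val]
    rfl
  -- derive the contradiction
  have hv1 := hvieta 1 (by omega)
  rw [e1] at hv1
  have hm1 : D.roots.esymm (m + 1) = 0 := by
    have h21 : m + 2 - 1 = m + 1 := by omega
    rw [h21] at hv1
    have hne : (D.leadingCoeff * (-1 : ℝ) ^ (m + 1)) ≠ 0 :=
      mul_ne_zero (ne_of_gt hlcpos) (pow_ne_zero _ (by norm_num))
    rcases mul_eq_zero.1 hv1.symm with h | h
    · exact absurd h hne
    · exact h
  have hv0 := hvieta 0 (by omega)
  have hv2 := hvieta 2 (by omega)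
  rw [e0] at hv0
  rw [e2] at hv2
  have hprod : 0 < D.roots.esymm (m + 2) * D.roots.esymm m := by
    have hs0 : (m + 2 - 0) = m + 2 := by omega
    have hs2 : (m + 2 - 2) = m := by omega
    rw [hs0] at hv0
    rw [hs2] at hv2
    have hpos0 : 0 < ((0 + r).descFactorial r : ℝ) * esymmOn B (m + 2) f :=
      mul_pos (hcpos 0) h2
    have hpos2 : 0 < ((2 + r).descFactorial r : ℝ) * esymmOn B m f :=
      mul_pos (hcpos 2) h0
    rw [hv0] at hpos0
    rw [hv2] at hpos2
    have := mul_pos hpos0 hpos2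
    have hsign : D.leadingCoeff * (-1:ℝ) ^ (m + 2) * D.roots.esymm (m + 2)
        * (D.leadingCoeff * (-1:ℝ) ^ m * D.roots.esymm m)
        = (D.leadingCoeff ^ 2 * ((-1:ℝ)^(m+2) * (-1:ℝ)^m))
          * (D.roots.esymm (m + 2) * D.roots.esymm m) := by ring
    rw [hsign] at this
    have hsq : (-1:ℝ)^(m+2) * (-1:ℝ)^m = ((-1:ℝ)^(m+1))^2 := by ring
    have : 0 < (D.leadingCoeff ^ 2 * ((-1:ℝ)^(m+1))^2) * (D.roots.esymm (m + 2) * D.roots.esymm m) := by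
      rw [← hsq]; exact this
    have hfac : 0 < D.leadingCoeff ^ 2 * ((-1:ℝ)^(m+1))^2 := by positivity
    nlinarith [this, hfac]
  have hsos := newton_top_sos m y
  rw [hesymm, hesymm, hesymm, hm1] at hsos
  nlinarith [hprod]

end PolyPart

section ConvexHelpers
variable {E : Type*} [AddCommGroup E] [Module ℝ E] {s : Set E}

theorem comb_pos {a b X Y : ℝ} (ha : 0 ≤ a) (hb : 0 ≤ b) (hab : a + b = 1)
    (hX : 0 < X) (hY : 0 < Y) : 0 < a * X + b * Y := by
  rcases eq_or_lt_of_le ha with h | h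
  · have hb1 : b = 1 := by linarith
    rw [← h, hb1]; simpa using hY
  · nlinarith [mul_pos h hX, mul_nonneg hb hY.le]

theorem convexOn_congrOn {f g : E → ℝ} (hf : ConvexOn ℝ s f) (h : ∀ x ∈ s, f x = g x) :
    ConvexOn ℝ s g := by
  refine ⟨hf.1, fun x hx y hy a b ha hb hab => ?_⟩
  rw [← h _ hx, ← h _ hy, ← h _ (hf.1 hx hy ha hb hab)]
  exact hf.2 hx hy ha hb hab

theorem concaveOn_congrOn {f g : E → ℝ} (hf : ConcaveOn ℝ s f) (h : ∀ x ∈ s, f x = g x) :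
    ConcaveOn ℝ s g := by
  refine ⟨hf.1, fun x hx y hy a b ha hb hab => ?_⟩
  rw [← h _ hx, ← h _ hy, ← h _ (hf.1 hx hy ha hb hab)]
  exact hf.2 hx hy ha hb hab

theorem convexOn_neg_log {u : E → ℝ} (hu : ConcaveOn ℝ s u) (hpos : ∀ x ∈ s, 0 < u x) :
    ConvexOn ℝ s fun x => -Real.log (u x) := by
  refine ⟨hu.1, fun x hx y hy a b ha hb hab => ?_⟩
  have hux := hpos x hx
  have huy := hpos y hy
  have hcomb : 0 < a * u x + b * u y := comb_pos ha hb hab hux huy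
  have h1 : a * u x + b * u y ≤ u (a • x + b • y) := by
    have := hu.2 hx hy ha hb hab
    simpa [smul_eq_mul] using this
  have hlog1 : Real.log (a * u x + b * u y) ≤ Real.log (u (a • x + b • y)) :=
    (Real.log_le_log_iff hcomb (lt_of_lt_of_le hcomb h1)).2 h1
  have hlog2 : a * Real.log (u x) + b * Real.log (u y) ≤ Real.log (a * u x + b * u y) := by
    have := strictConcaveOn_log_Ioi.concaveOn.2 (Set.mem_Ioi.2 hux) (Set.mem_Ioi.2 huy) ha hb hab
    simpa [smul_eq_mul] using this
  simp only [smul_eq_mul]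
  linarith

theorem convexOn_exp_comp {v : E → ℝ} (hv : ConvexOn ℝ s v) :
    ConvexOn ℝ s fun x => Real.exp (v x) := by
  refine ⟨hv.1, fun x hx y hy a b ha hb hab => ?_⟩
  have h1 : v (a • x + b • y) ≤ a * v x + b * v y := by
    have := hv.2 hx hy ha hb hab
    simpa [smul_eq_mul] using this
  have h2 : Real.exp (v (a • x + b • y)) ≤ Real.exp (a * v x + b * v y) :=
    Real.exp_le_exp.2 h1
  have h3 : Real.exp (a * v x + b * v y) ≤ a * Real.exp (v x) + b * Real.exp (v y) := by
    have := convexOn_exp.2 (Set.mem_univ (v x)) (Set.mem_univ (v y)) ha hb hab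
    simpa [smul_eq_mul] using this
  simp only [smul_eq_mul]
  linarith

theorem convexOn_sq_div {u b : E → ℝ} (hs : Convex ℝ s)
    (hu : ∀ (x y : E) (a c : ℝ), u (a • x + c • y) = a * u x + c * u y)
    (hb : ConcaveOn ℝ s b) (hbpos : ∀ x ∈ s, 0 < b x) :
    ConvexOn ℝ s fun x => u x ^ 2 / b x := by
  refine ⟨hs, fun x hx y hy a c ha hc hac => ?_⟩
  have hbx := hbpos x hx
  have hby := hbpos y hy
  have hcomb : 0 < a * b x + c * b y := comb_pos ha hc hac hbx hby
  have h1 : a * b x + c * b y ≤ b (a • x + c • y) := by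
    have := hb.2 hx hy ha hc hac
    simpa [smul_eq_mul] using this
  have hbc : 0 < b (a • x + c • y) := lt_of_lt_of_le hcomb h1
  have key : u (a • x + c • y) ^ 2 / b (a • x + c • y)
      ≤ a * (u x ^ 2 / b x) + c * (u y ^ 2 / b y) := by
    rw [hu]
    have step1 : (a * u x + c * u y) ^ 2 / b (a • x + c • y)
        ≤ (a * u x + c * u y) ^ 2 / (a * b x + c * b y) :=
      div_le_div_of_nonneg_left (sq_nonneg _) hcomb h1
    have step2 : (a * u x + c * u y) ^ 2 / (a * b x + c * b y)
        ≤ a * (u x ^ 2 / b x) + c * (u y ^ 2 / b y) := by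
      rw [show a * (u x ^ 2 / b x) + c * (u y ^ 2 / b y)
          = (a * (u x ^ 2 * b y) + c * (u y ^ 2 * b x)) / (b x * b y) by
        field_simp]
      rw [div_le_div_iff₀ hcomb (by positivity)]
      nlinarith [sq_nonneg (u x * b y - u y * b x), mul_pos hbx hby,
        mul_nonneg ha hc, sq_nonneg (u x), sq_nonneg (u y),
        mul_nonneg (mul_nonneg ha hc) (sq_nonneg (u x * b y - u y * b x))]
    exact le_trans step1 step2
  simpa [smul_eq_mul] using key

theorem convexOn_finset_sum {κ : Type*} [DecidableEq κ] (t : Finset κ) {F : κ → E → ℝ}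
    (hs : Convex ℝ s) (h : ∀ k ∈ t, ConvexOn ℝ s (F k)) :
    ConvexOn ℝ s fun x => ∑ k ∈ t, F k x := by
  induction t using Finset.induction with
  | empty => simpa using convexOn_const 0 hs
  | @insert a t ha ih =>
    have h1 : ConvexOn ℝ s fun x => F a x + ∑ k ∈ t, F k x := by
      have := (h a (Finset.mem_insert_self a t)).add
        (ih fun k hk => h k (Finset.mem_insert_of_mem hk))
      exact this
    exact convexOn_congrOn h1 fun x _ => by rw [Finset.sum_insert ha]

theorem concaveOn_linear (hs : Convex ℝ s) {u : E → ℝ}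
    (hu : ∀ (x y : E) (a c : ℝ), u (a • x + c • y) = a * u x + c * u y) :
    ConcaveOn ℝ s u :=
  ⟨hs, fun x hx y hy a c _ _ _ => by rw [hu]; simp [smul_eq_mul]⟩

end ConvexHelpers


section Master
variable {ι : Type*} [DecidableEq ι]

def Gam (A : Finset ι) (k : ℕ) : Set (ι → ℝ) :=
  {f | ∀ j : ℕ, 1 ≤ j → j ≤ k → 0 < esymmOn A j f}

theorem Gam_mono {A : Finset ι} {k k' : ℕ} (h : k ≤ k') : Gam A k' ⊆ Gam A k :=
  fun f hf j h1 h2 => hf j h1 (h2.trans h)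

theorem Gam_zero (A : Finset ι) : Gam A 0 = Set.univ := by
  ext f; simp only [Gam, Set.mem_setOf_eq, Set.mem_univ, iff_true]
  intro j h1 h2; omega

theorem mem_Gam_pos {A : Finset ι} {f : ι → ℝ} {k : ℕ} (hf : f ∈ Gam A k) {j : ℕ}
    (hj : j ≤ k) : 0 < esymmOn A j f := by
  rcases Nat.eq_zero_or_pos j with h | h
  · rw [h, esymmOn_zero]; norm_num
  · exact hf j h hj

theorem Gam_smul {A : Finset ι} {k : ℕ} {f : ι → ℝ} (hf : f ∈ Gam A k) {c : ℝ} (hc : 0 < c) :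
    c • f ∈ Gam A k := by
  intro j h1 h2
  have h : esymmOn A j (c • f) = c ^ j * esymmOn A j f := by
    have : (c • f) = fun i => c * f i := by funext i; simp [smul_eq_mul]
    rw [this, esymmOn_smul]
  rw [h]
  exact mul_pos (pow_pos hc j) (hf j h1 h2)

theorem Gam_pos_mem {A : Finset ι} {k : ℕ} {f : ι → ℝ} (hpos : ∀ i ∈ A, 0 < f i)
    (hk : k ≤ A.card) : f ∈ Gam A k :=
  fun j _ h2 => esymmOn_pos hpos (h2.trans hk)

theorem powersetCard_one_eq (A : Finset ι) :
    Finset.powersetCard 1 A = A.image (fun i => ({i} : Finset ι)) := by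
  ext s
  simp only [Finset.mem_powersetCard, Finset.mem_image]
  constructor
  · rintro ⟨hsub, hc⟩
    obtain ⟨i, rfl⟩ := Finset.card_eq_one.1 hc
    exact ⟨i, hsub (Finset.mem_singleton_self i), rfl⟩
  · rintro ⟨i, hi, rfl⟩
    exact ⟨Finset.singleton_subset_iff.2 hi, Finset.card_singleton i⟩

theorem esymmOn_one (A : Finset ι) (f : ι → ℝ) : esymmOn A 1 f = ∑ i ∈ A, f i := by
  unfold esymmOn
  rw [powersetCard_one_eq, Finset.sum_image (fun i _ j _ h => Finset.singleton_injective h)]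
  simp

theorem esymmOn_comb (A : Finset ι) (j : ℕ) (x y : ι → ℝ) (a c : ℝ) :
    esymmOn A 1 (a • x + c • y) = a * esymmOn A 1 x + c * esymmOn A 1 y := by
  rw [esymmOn_one, esymmOn_one, esymmOn_one, Finset.mul_sum, Finset.mul_sum,
    ← Finset.sum_add_distrib]
  refine Finset.sum_congr rfl fun i _ => ?_
  simp [smul_eq_mul]

/-- The master induction: convexity of the cone, concavity of the quotient, and
positivity of the projected symmetric functions. -/
theorem master (m : ℕ) : ∀ (A : Finset ι), m + 1 ≤ A.card →
    (Convex ℝ (Gam A m)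
      ∧ ConcaveOn ℝ (Gam A m) (fun f => esymmOn A (m + 1) f / esymmOn A m f))
    ∧ (∀ i ∈ A, ∀ f ∈ Gam A m, f ∈ Gam (A.erase i) (m - 1)) := by
  induction m with
  | zero =>
    intro A hA
    refine ⟨⟨?_, ?_⟩, ?_⟩
    · rw [Gam_zero]; exact convex_univ
    · have hlin : ConcaveOn ℝ (Gam A 0) (fun f => esymmOn A 1 f) := by
        refine concaveOn_linear ?_ (fun x y a c => esymmOn_comb A 1 x y a c)
        rw [Gam_zero]; exact convex_univ
      refine concaveOn_congrOn hlin fun f _ => ?_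
      rw [esymmOn_zero, div_one]
    · intro i hi f hf
      intro j h1 h2; omega
  | succ m ih =>
    intro A hA
    have ihA := ih A (by omega)
    -- Part (a) : convexity of Gam A (m+1)
    have hset : Gam A (m + 1)
        = {f ∈ Gam A m | (0:ℝ) < esymmOn A (m + 1) f / esymmOn A m f} := by
      ext f
      simp only [Set.mem_setOf_eq]
      constructor
      · intro hf
        have hm : f ∈ Gam A m := Gam_mono (by omega) hf
        refine ⟨hm, div_pos (hf (m + 1) (by omega) le_rfl) (mem_Gam_pos hm le_rfl)⟩
      · rintro ⟨hm, hq⟩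
        intro j h1 h2
        rcases Nat.lt_or_ge j (m + 1) with h | h
        · exact hm j h1 (by omega)
        · have hj : j = m + 1 := by omega
          subst hj
          have hb : 0 < esymmOn A m f := mem_Gam_pos hm le_rfl
          have := mul_pos hq hb
          rwa [div_mul_cancel₀ _ (ne_of_gt hb)] at this
    have hconv : Convex ℝ (Gam A (m + 1)) := by
      rw [hset]
      exact ihA.1.2.convex_gt 0
    -- Part (c) : projection positivity
    have hproj : ∀ i ∈ A, ∀ f ∈ Gam A (m + 1), f ∈ Gam (A.erase i) m := by
      intro i hi f hf
      have hlow : f ∈ Gam (A.erase i) (m - 1) :=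
        ihA.2 i hi f (Gam_mono (by omega) hf)
      -- nonnegativity of esymmOn (A.erase i) m f  via the ray argument
      have hnn : 0 ≤ esymmOn (A.erase i) m f := by
        set E1 := esymmOn (A.erase i) (m + 1) f with hE1
        set E0 := esymmOn (A.erase i) m f with hE0
        have hray : ∀ t : ℝ, 0 < t → 0 ≤ E1 + (f i + t) * E0 := by
          intro t ht
          set eI : ι → ℝ := fun l => if l = i then 1 else 0 with heI
          have key : ∀ ε : ℝ, 0 < ε →
              0 < esymmOn A (m + 1) (f + t • (fun l => eI l + ε)) := by
            intro ε hε
            have hpos : (fun l => eI l + ε) ∈ Gam A (m + 1) := by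
              refine Gam_pos_mem (fun l _ => ?_) (by omega)
              simp only [heI]
              split <;> linarith
            have h2' : t • (fun l => eI l + ε) ∈ Gam A (m + 1) := Gam_smul hpos ht
            have hcomb : (1/2 : ℝ) • f + (1/2 : ℝ) • (t • (fun l => eI l + ε))
                ∈ Gam A (m + 1) :=
              hconv hf h2' (by norm_num) (by norm_num) (by norm_num)
            have hfin : (2:ℝ) • ((1/2 : ℝ) • f + (1/2 : ℝ) • (t • (fun l => eI l + ε)))
                ∈ Gam A (m + 1) := Gam_smul hcomb (by norm_num)
            have heq : (2:ℝ) • ((1/2 : ℝ) • f + (1/2 : ℝ) • (t • (fun l => eI l + ε)))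
                = f + t • (fun l => eI l + ε) := by
              funext l
              simp only [Pi.smul_apply, Pi.add_apply, smul_eq_mul]
              ring
            rw [heq] at hfin
            exact hfin (m + 1) (by omega) le_rfl
          -- limit ε → 0⁺
          have hcont : Continuous fun ε : ℝ =>
              esymmOn A (m + 1) (f + t • (fun l => eI l + ε)) := by
            unfold esymmOn
            refine continuous_finset_sum _ fun s _ => continuous_finset_prod _ fun l _ => ?_
            simp only [Pi.add_apply, Pi.smul_apply, smul_eq_mul]
            fun_prop
          have hlim : 0 ≤ esymmOn A (m + 1) (f + t • (fun l => eI l + 0)) := by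
            refine ge_of_tendsto (hcont.continuousWithinAt (s := Set.Ioi (0:ℝ)) (x := 0)) ?_
            exact Filter.eventually_of_mem self_mem_nhdsWithin
              fun ε hε => (key ε hε).le
          have hsimp : esymmOn A (m + 1) (f + t • (fun l => eI l + 0))
              = E1 + (f i + t) * E0 := by
            have hgg : esymmOn A (m + 1) (f + t • (fun l => eI l + 0))
                = esymmOn (A.erase i) (m + 1) (f + t • (fun l => eI l + 0))
                  + (f i + t * (eI i + 0)) * esymmOn (A.erase i) m
                    (f + t • (fun l => eI l + 0)) := by
              have := esymmOn_erase hi (j := m) (f := f + t • (fun l => eI l + 0))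
              simpa [Pi.add_apply, Pi.smul_apply, smul_eq_mul] using this
            rw [hgg]
            have hagree : ∀ j' : ℕ, esymmOn (A.erase i) j' (f + t • (fun l => eI l + 0))
                = esymmOn (A.erase i) j' f := by
              intro j'
              refine esymmOn_congr (fun l hl => ?_) j'
              have hne : l ≠ i := Finset.ne_of_mem_erase hl
              simp [heI, hne]
            rw [hagree, hagree]
            simp [heI, hE1, hE0]
          rw [hsimp] at hlim
          exact hlim
        -- conclude E0 ≥ 0
        by_contra hneg
        push_neg at hneg
        set t0 : ℝ := max 1 ((E1 + f i * E0 + 1) / (-E0)) with ht0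
        have ht0pos : 0 < t0 := lt_of_lt_of_le one_pos (le_max_left _ _)
        have hbound : E1 + f i * E0 + 1 ≤ t0 * (-E0) := by
          have h1 : (E1 + f i * E0 + 1) / (-E0) ≤ t0 := le_max_right _ _
          have h2 : (0:ℝ) < -E0 := by linarith
          calc E1 + f i * E0 + 1 = ((E1 + f i * E0 + 1) / (-E0)) * (-E0) :=
                (div_mul_cancel₀ _ (ne_of_gt h2)).symm
            _ ≤ t0 * (-E0) := mul_le_mul_of_nonneg_right h1 h2.le
        have := hray t0 ht0pos
        nlinarith
      -- strict positivity
      have hstrict : 0 < esymmOn (A.erase i) m f := by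
        rcases Nat.eq_zero_or_pos m with hm0 | hmpos
        · subst hm0; rw [esymmOn_zero]; norm_num
        rcases lt_or_eq_of_le hnn with h | h
        · exact h
        exfalso
        have hE0 : esymmOn (A.erase i) m f = 0 := h.symm
        have hE1 : esymmOn (A.erase i) (m + 1) f = esymmOn A (m + 1) f := by
          have := esymmOn_erase hi (j := m) (f := f)
          rw [hE0] at this
          linarith [this]
        have hE1pos : 0 < esymmOn (A.erase i) (m + 1) f := by
          rw [hE1]; exact hf (m + 1) (by omega) le_rfl
        have hEm1pos : 0 < esymmOn (A.erase i) (m - 1) f := by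
          rcases Nat.eq_zero_or_pos (m - 1) with h0 | hp
          · rw [h0, esymmOn_zero]; norm_num
          · exact hlow (m - 1) hp le_rfl
        have hcard : (m - 1) + 2 ≤ (A.erase i).card := by
          rw [Finset.card_erase_of_mem hi]
          omega
        refine no_sandwich (A.erase i) f (m - 1) hcard hEm1pos ?_ ?_
        · have : m - 1 + 1 = m := by omega
          rw [this, hE0]
        · have : m - 1 + 2 = m + 1 := by omega
          rw [this]; exact hE1pos
      -- assemble membership in Gam (A.erase i) m
      intro j h1 h2
      rcases Nat.lt_or_ge j m with h | h
      · exact hlow j h1 (by omega)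
      · have : j = m := by omega
        subst this
        exact hstrict
    -- Part (b) : concavity of the quotient at level m+1
    have hconc : ConcaveOn ℝ (Gam A (m + 1))
        (fun f => esymmOn A (m + 2) f / esymmOn A (m + 1) f) := by
      -- the building blocks
      set G : ι → (ι → ℝ) → ℝ := fun i f =>
        f i + esymmOn (A.erase i) (m + 1) f / esymmOn (A.erase i) m f with hG
      have hGconc : ∀ i ∈ A, ConcaveOn ℝ (Gam A (m + 1)) (G i) := by
        intro i hi
        have hcard : m + 1 ≤ (A.erase i).card := by
          rw [Finset.card_erase_of_mem hi]; omega
        have hq := (ih (A.erase i) hcard).1.2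
        have hq' : ConcaveOn ℝ (Gam A (m + 1))
            (fun f => esymmOn (A.erase i) (m + 1) f / esymmOn (A.erase i) m f) :=
          hq.subset (fun f hf => by
            have := hproj i hi f hf
            intro j h1 h2
            exact this j h1 (by omega)) hconv
        have hcoord : ConcaveOn ℝ (Gam A (m + 1)) (fun f : ι → ℝ => f i) :=
          concaveOn_linear hconv (fun x y a c => by simp [smul_eq_mul])
        have := hcoord.add hq'
        exact concaveOn_congrOn this fun f _ => rfl
      have hGpos : ∀ i ∈ A, ∀ f ∈ Gam A (m + 1), 0 < G i f := by
        intro i hi f hf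
        have hE0 : 0 < esymmOn (A.erase i) m f := mem_Gam_pos (hproj i hi f hf) le_rfl
        have hEA : 0 < esymmOn A (m + 1) f := hf (m + 1) (by omega) le_rfl
        have hid : G i f = esymmOn A (m + 1) f / esymmOn (A.erase i) m f := by
          rw [hG]
          have her := esymmOn_erase hi (j := m) (f := f)
          field_simp
          linarith [her]
        rw [hid]
        exact div_pos hEA hE0
      have hti : ∀ i ∈ A, ConvexOn ℝ (Gam A (m + 1)) (fun f : ι → ℝ => (f i) ^ 2 / G i f) := by
        intro i hi
        exact convexOn_sq_div hconv (fun x y a c => by simp [smul_eq_mul])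
          (hGconc i hi) (hGpos i hi)
      have hS : ConvexOn ℝ (Gam A (m + 1))
          (fun f : ι → ℝ => ∑ i ∈ A, (f i) ^ 2 / G i f) :=
        convexOn_finset_sum A hconv (fun i hi => hti i hi)
      have hlin : ConcaveOn ℝ (Gam A (m + 1)) (fun f => esymmOn A 1 f) :=
        concaveOn_linear hconv (fun x y a c => esymmOn_comb A 1 x y a c)
      have hcomb : ConcaveOn ℝ (Gam A (m + 1))
          (fun f => (1 / (m + 2 : ℝ)) • ((fun f => esymmOn A 1 f)
            - (fun f : ι → ℝ => ∑ i ∈ A, (f i) ^ 2 / G i f)) f) :=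
        (hlin.sub hS).smul (by positivity)
      refine concaveOn_congrOn hcomb fun f hf => ?_
      -- the pointwise identity on the cone
      have hEA : 0 < esymmOn A (m + 1) f := hf (m + 1) (by omega) le_rfl
      have hE0 : ∀ i ∈ A, 0 < esymmOn (A.erase i) m f := fun i hi =>
        mem_Gam_pos (hproj i hi f hf) le_rfl
      have hGid : ∀ i ∈ A, G i f = esymmOn A (m + 1) f / esymmOn (A.erase i) m f := by
        intro i hi
        rw [hG]
        have her := esymmOn_erase hi (j := m) (f := f)
        have := hE0 i hi
        field_simp
        linarith [her]
      have hterm : ∀ i ∈ A, (f i) ^ 2 / G i f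
          = (f i) ^ 2 * esymmOn (A.erase i) m f / esymmOn A (m + 1) f := by
        intro i hi
        have h1 := hE0 i hi
        rw [hGid i hi]
        rw [div_div_eq_mul_div]
      have hsum : ∑ i ∈ A, (f i) ^ 2 / G i f
          = (∑ i ∈ A, (f i) ^ 2 * esymmOn (A.erase i) m f) / esymmOn A (m + 1) f := by
        rw [Finset.sum_congr rfl hterm, Finset.sum_div]
      have hmain : (m + 2 : ℝ) * esymmOn A (m + 2) f
          = esymmOn A 1 f * esymmOn A (m + 1) f
            - ∑ i ∈ A, (f i) ^ 2 * esymmOn (A.erase i) m f := by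
        have hw := esymmOn_weighted_sum A (m + 1) f
        have hper : ∀ i ∈ A, f i * esymmOn (A.erase i) (m + 1) f
            = f i * esymmOn A (m + 1) f - (f i) ^ 2 * esymmOn (A.erase i) m f := by
          intro i hi
          have her := esymmOn_erase hi (j := m) (f := f)
          linear_combination (-(f i)) * her
        have hw2 : ∑ i ∈ A, (f i * esymmOn A (m + 1) f
            - (f i) ^ 2 * esymmOn (A.erase i) m f)
            = ((m + 1 : ℕ) + 1 : ℝ) * esymmOn A (m + 1 + 1) f := by
          rw [← hw]
          exact (Finset.sum_congr rfl hper).symm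
        rw [Finset.sum_sub_distrib, ← Finset.sum_mul] at hw2
        rw [esymmOn_one]
        push_cast at hw2 ⊢
        linarith [hw2]
      -- finish
      simp only [Pi.sub_apply, smul_eq_mul]
      rw [hsum]
      have hne : esymmOn A (m + 1) f ≠ 0 := ne_of_gt hEA
      have hne2 : (m + 2 : ℝ) ≠ 0 := by positivity
      have hkey : esymmOn A 1 f
          - (∑ i ∈ A, f i ^ 2 * esymmOn (A.erase i) m f) / esymmOn A (m + 1) f
          = ((m + 2 : ℝ) * esymmOn A (m + 2) f) / esymmOn A (m + 1) f := by
        rw [eq_div_iff hne, sub_mul, div_mul_cancel₀ _ hne]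
        linarith [hmain]
      rw [hkey]
      field_simp
    exact ⟨⟨hconv, hconc⟩, hproj⟩

theorem prod_ratio (A : Finset ι) (f : ι → ℝ) (l : ℕ) :
    ∀ m : ℕ, l ≤ m → (∀ j ≤ m, 0 < esymmOn A j f) →
      ∏ j ∈ Finset.Ico l m, (esymmOn A (j + 1) f / esymmOn A j f)
        = esymmOn A m f / esymmOn A l f := by
  intro m hlm
  induction m, hlm using Nat.le_induction with
  | base =>
    intro hpos
    rw [Finset.Ico_self, Finset.prod_empty, div_self (ne_of_gt (hpos l le_rfl))]
  | succ m hlm ih =>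
    intro hpos
    rw [Finset.prod_Ico_succ_top hlm, ih (fun j hj => hpos j (by omega))]
    have h1 : esymmOn A m f ≠ 0 := ne_of_gt (hpos m (by omega))
    have h2 : esymmOn A l f ≠ 0 := ne_of_gt (hpos l (by omega))
    field_simp

theorem ratio_convex (A : Finset ι) (m : ℕ) (hm : m + 1 ≤ A.card) (l : ℕ) (hl : l ≤ m) :
    ConvexOn ℝ (Gam A m) (fun f => esymmOn A l f / esymmOn A m f) := by
  have hconvm : Convex ℝ (Gam A m) := (master m A hm).1.1
  have hqj : ∀ j ∈ Finset.Ico l m, ConvexOn ℝ (Gam A m)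
      (fun f => -Real.log (esymmOn A (j + 1) f / esymmOn A j f)) := by
    intro j hj
    rw [Finset.mem_Ico] at hj
    have hq := (master j A (by omega)).1.2
    have hq' : ConcaveOn ℝ (Gam A m) (fun f => esymmOn A (j + 1) f / esymmOn A j f) :=
      hq.subset (Gam_mono (by omega)) hconvm
    refine convexOn_neg_log hq' fun f hf => ?_
    exact div_pos (mem_Gam_pos hf (by omega)) (mem_Gam_pos hf (by omega))
  have hV : ConvexOn ℝ (Gam A m)
      (fun f => ∑ j ∈ Finset.Ico l m, -Real.log (esymmOn A (j + 1) f / esymmOn A j f)) :=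
    convexOn_finset_sum _ hconvm hqj
  have hexp := convexOn_exp_comp hV
  refine convexOn_congrOn hexp fun f hf => ?_
  have hpos : ∀ j ≤ m, 0 < esymmOn A j f := fun j hj => mem_Gam_pos hf hj
  have hprod := prod_ratio A f l m hl hpos
  have hqpos : ∀ j ∈ Finset.Ico l m, 0 < esymmOn A (j + 1) f / esymmOn A j f := by
    intro j hj
    rw [Finset.mem_Ico] at hj
    exact div_pos (hpos (j + 1) (by omega)) (hpos j (by omega))
  calc Real.exp (∑ j ∈ Finset.Ico l m, -Real.log (esymmOn A (j + 1) f / esymmOn A j f))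
      = ∏ j ∈ Finset.Ico l m, Real.exp (-Real.log (esymmOn A (j + 1) f / esymmOn A j f)) :=
        Real.exp_sum _ _
    _ = ∏ j ∈ Finset.Ico l m, (esymmOn A (j + 1) f / esymmOn A j f)⁻¹ := by
        refine Finset.prod_congr rfl fun j hj => ?_
        rw [Real.exp_neg, Real.exp_log (hqpos j hj)]
    _ = (∏ j ∈ Finset.Ico l m, (esymmOn A (j + 1) f / esymmOn A j f))⁻¹ := by
        rw [Finset.prod_inv_distrib]
    _ = (esymmOn A m f / esymmOn A l f)⁻¹ := by rw [hprod]
    _ = esymmOn A l f / esymmOn A m f := by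
        rw [inv_div]


end Master

/-- The `k`-th elementary symmetric function of a vector `lam ∈ ℝⁿ`. -/
noncomputable def esymm (n k : ℕ) (lam : Fin n → ℝ) : ℝ :=
  ∑ s ∈ Finset.powersetCard k (Finset.univ : Finset (Fin n)), ∏ i ∈ s, lam i

/-- The Gårding cone `Γ_k = {λ ∈ ℝⁿ : σ_j(λ) > 0 for all 1 ≤ j ≤ k}`. -/
def GammaCone (n k : ℕ) : Set (Fin n → ℝ) :=
  {lam | ∀ j : ℕ, 1 ≤ j → j ≤ k → 0 < esymm n j lam}

/-- The Krylov-type operator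
`f(λ) = σ_k(λ)/σ_{k-1}(λ) − ∑_{l=0}^{k-2} β_l σ_l(λ)/σ_{k-1}(λ)`. -/
noncomputable def krylovF (n k : ℕ) (β : ℕ → ℝ) (lam : Fin n → ℝ) : ℝ :=
  esymm n k lam / esymm n (k - 1) lam
    - ∑ l ∈ Finset.range (k - 1), β l * (esymm n l lam / esymm n (k - 1) lam)

/-- Lemma 2.11, concavity part: if `β_0, …, β_{k-2} ≥ 0`, then
`f(λ) = σ_k/σ_{k-1} − ∑_{l=0}^{k-2} β_l σ_l/σ_{k-1}` is concave on `Γ_{k-1}`. -/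

theorem krylovF_concave (n k : ℕ) (hn : 2 ≤ n) (hk : 2 ≤ k) (hkn : k ≤ n)
    (β : ℕ → ℝ) (hβ : ∀ l ≤ k - 2, 0 ≤ β l) :
    ConcaveOn ℝ (GammaCone n (k - 1)) (krylovF n k β) := by
  obtain ⟨m, rfl⟩ : ∃ m, k = m + 1 := ⟨k - 1, by omega⟩
  have hm1 : 1 ≤ m := by omega
  have hesymm : ∀ j lam, esymm n j lam = esymmOn (univ : Finset (Fin n)) j lam := fun _ _ => rfl
  have hGamma : GammaCone n (m + 1 - 1) = Gam (univ : Finset (Fin n)) m := by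
    simp only [Nat.add_sub_cancel]
    rfl
  have hcard : m + 1 ≤ (univ : Finset (Fin n)).card := by
    rw [Finset.card_univ, Fintype.card_fin]
    omega
  have hq : ConcaveOn ℝ (Gam (univ : Finset (Fin n)) m)
      (fun f => esymmOn univ (m + 1) f / esymmOn univ m f) := (master m univ hcard).1.2
  have hsum : ConvexOn ℝ (Gam (univ : Finset (Fin n)) m)
      (fun f => ∑ l ∈ Finset.range m, β l * (esymmOn univ l f / esymmOn univ m f)) := by
    refine convexOn_finset_sum _ (master m univ hcard).1.1 fun l hl => ?_
    rw [Finset.mem_range] at hl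
    have hconv := ratio_convex (univ : Finset (Fin n)) m hcard l (by omega)
    have hβl : 0 ≤ β l := hβ l (by omega)
    have := hconv.smul hβl
    exact convexOn_congrOn this fun f _ => by rw [smul_eq_mul]
  have hfinal := hq.sub hsum
  rw [hGamma]
  refine concaveOn_congrOn hfinal fun f _ => ?_
  simp only [Pi.sub_apply]
  rw [krylovF]
  simp only [Nat.add_sub_cancel]
  rfl
end

section
/- (Lemma giving inequality (2.8) = \eqref{uii}.) Let n ≥ 2, 2 ≤ k ≤ n, and let β_0,…,β_{k-2} be nonnegative real numbers. Define f(λ) = σ_k(λ)/σ_{k-1}(λ) − Σ_{l=0}^{k-2} β_l · σ_l(λ)/σ_{k-1}(λ) on Γ_{k-1}, and write f_i(λ) = ∂f/∂λ_i(λ). Then for all λ ∈ Γ_{k-1} and μ ∈ Γ_{k-1}: Σ_{i=1}^{n} f_i(λ) · μ_i ≥ f(μ) + Σ_{l=0}^{k-2} (k−l) · β_l · σ_l(λ)/σ_{k-1}(λ). -/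
set_option linter.unusedSectionVars false

namespace KrylovAux

open Finset

variable {ι : Type*} [DecidableEq ι]

noncomputable def es (A : Finset ι) (j : ℕ) (x : ι → ℝ) : ℝ :=
  ∑ s ∈ A.powersetCard j, ∏ i ∈ s, x i

def Gam (A : Finset ι) (m : ℕ) : Set (ι → ℝ) :=
  {x | ∀ j, 1 ≤ j → j ≤ m → 0 < es A j x}

lemma es_zero (A : Finset ι) (x : ι → ℝ) : es A 0 x = 1 := by simp [es]

lemma es_one (A : Finset ι) (x : ι → ℝ) : es A 1 x = ∑ i ∈ A, x i := by
  unfold es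
  rw [Finset.powersetCard_one, Finset.sum_map]
  simp

lemma es_of_card_lt {A : Finset ι} {j : ℕ} (h : A.card < j) (x : ι → ℝ) : es A j x = 0 := by
  unfold es
  rw [Finset.powersetCard_eq_empty.2 h, Finset.sum_empty]

lemma es_congr {A : Finset ι} {j : ℕ} {x y : ι → ℝ} (h : ∀ i ∈ A, x i = y i) :
    es A j x = es A j y := by
  refine Finset.sum_congr rfl fun s hs => Finset.prod_congr rfl fun i hi => ?_
  exact h i ((Finset.mem_powersetCard.1 hs).1 hi)

lemma es_smul (A : Finset ι) (j : ℕ) (c : ℝ) (x : ι → ℝ) :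
    es A j (c • x) = c ^ j * es A j x := by
  unfold es
  rw [Finset.mul_sum]
  refine Finset.sum_congr rfl fun s hs => ?_
  have hc := (Finset.mem_powersetCard.1 hs).2
  simp only [Pi.smul_apply, smul_eq_mul]
  rw [Finset.prod_mul_distrib, Finset.prod_const, hc]

lemma es_insert {A : Finset ι} {i : ι} (hi : i ∉ A) (j : ℕ) (x : ι → ℝ) :
    es (insert i A) (j + 1) x = es A (j + 1) x + x i * es A j x := by
  unfold es
  rw [Finset.powersetCard_succ_insert hi, Finset.sum_union, Finset.sum_image, Finset.mul_sum]
  · congr 1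
    refine Finset.sum_congr rfl fun s hs => ?_
    have his : i ∉ s := fun h => hi ((Finset.mem_powersetCard.1 hs).1 h)
    rw [Finset.prod_insert his]
  · intro s hs t ht hst
    have his : i ∉ s := fun h => hi ((Finset.mem_powersetCard.1 hs).1 h)
    have hit : i ∉ t := fun h => hi ((Finset.mem_powersetCard.1 ht).1 h)
    have := congrArg (Finset.erase · i) hst
    simpa [Finset.erase_insert his, Finset.erase_insert hit] using this
  · rw [Finset.disjoint_left]
    intro s hs hs'
    have hsub : s ⊆ A := (Finset.mem_powersetCard.1 hs).1
    obtain ⟨t, ht, rfl⟩ := Finset.mem_image.1 hs'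
    exact hi (hsub (Finset.mem_insert_self i t))

lemma es_erase {A : Finset ι} {i : ι} (hi : i ∈ A) (j : ℕ) (x : ι → ℝ) :
    es A (j + 1) x = es (A.erase i) (j + 1) x + x i * es (A.erase i) j x := by
  conv_lhs => rw [← Finset.insert_erase hi]
  exact es_insert (Finset.notMem_erase i A) j x

lemma sum_mul_es_erase (A : Finset ι) (j : ℕ) (x : ι → ℝ) :
    ∑ i ∈ A, x i * es (A.erase i) j x = ((j : ℝ) + 1) * es A (j + 1) x := by
  have h1 : ∑ i ∈ A, x i * es (A.erase i) j x
      = ∑ p ∈ A.sigma (fun i => (A.erase i).powersetCard j), ∏ t ∈ insert p.1 p.2, x t := by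
    rw [Finset.sum_sigma]
    refine Finset.sum_congr rfl fun i hi => ?_
    unfold es
    rw [Finset.mul_sum]
    refine Finset.sum_congr rfl fun s hs => ?_
    have his : i ∉ s := fun h => (Finset.notMem_erase i A) ((Finset.mem_powersetCard.1 hs).1 h)
    rw [Finset.prod_insert his]
  have h2 : ((j : ℝ) + 1) * es A (j + 1) x
      = ∑ p ∈ (A.powersetCard (j + 1)).sigma (fun u => u), ∏ t ∈ p.1, x t := by
    rw [Finset.sum_sigma]
    unfold es
    rw [Finset.mul_sum]
    refine Finset.sum_congr rfl fun u hu => ?_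
    have hrfl : (∑ s ∈ u, ∏ t ∈ (⟨u, s⟩ : Σ _ : Finset ι, ι).fst, x t)
        = ∑ _s ∈ u, ∏ t ∈ u, x t := rfl
    rw [hrfl, Finset.sum_const, (Finset.mem_powersetCard.1 hu).2, nsmul_eq_mul]
    push_cast
    ring
  rw [h1, h2]
  refine Finset.sum_nbij' (i := fun p => ⟨insert p.1 p.2, p.1⟩)
    (j := fun q => ⟨q.2, q.1.erase q.2⟩) ?_ ?_ ?_ ?_ ?_
  · rintro ⟨i, s⟩ hp
    rw [Finset.mem_sigma] at hp ⊢
    obtain ⟨hiA, hs⟩ := hp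
    rw [Finset.mem_powersetCard] at hs
    have his : i ∉ s := fun h => (Finset.notMem_erase i A) (hs.1 h)
    refine ⟨Finset.mem_powersetCard.2 ⟨?_, ?_⟩, Finset.mem_insert_self _ _⟩
    · intro t ht
      rcases Finset.mem_insert.1 ht with rfl | ht
      · exact hiA
      · exact Finset.mem_of_mem_erase (hs.1 ht)
    · rw [Finset.card_insert_of_notMem his, hs.2]
  · rintro ⟨u, i⟩ hq
    rw [Finset.mem_sigma] at hq ⊢
    obtain ⟨hu, hiu⟩ := hq
    rw [Finset.mem_powersetCard] at hu
    refine ⟨hu.1 hiu, Finset.mem_powersetCard.2 ⟨?_, ?_⟩⟩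
    · exact fun t ht => Finset.mem_erase.2 ⟨(Finset.mem_erase.1 ht).1, hu.1 (Finset.mem_of_mem_erase ht)⟩
    · rw [Finset.card_erase_of_mem hiu, hu.2]
      omega
  · rintro ⟨i, s⟩ hp
    rw [Finset.mem_sigma] at hp
    have his : i ∉ s := fun h => (Finset.notMem_erase i A) ((Finset.mem_powersetCard.1 hp.2).1 h)
    simp [Finset.erase_insert his]
  · rintro ⟨u, i⟩ hq
    rw [Finset.mem_sigma] at hq
    simp [Finset.insert_erase hq.2]
  · rintro ⟨i, s⟩ hp
    rfl

lemma key_identity (A : Finset ι) (m : ℕ) (x : ι → ℝ) :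
    es A 1 x * es A (m + 1) x - ∑ i ∈ A, (x i) ^ 2 * es (A.erase i) m x
      = ((m : ℝ) + 2) * es A (m + 2) x := by
  have h3 := sum_mul_es_erase A (m + 1) x
  have hsum : ∑ i ∈ A, x i * es (A.erase i) (m + 1) x
      = ∑ i ∈ A, (x i * es A (m + 1) x - (x i) ^ 2 * es (A.erase i) m x) := by
    refine Finset.sum_congr rfl fun i hi => ?_
    rw [es_erase hi m x]
    ring
  rw [hsum, Finset.sum_sub_distrib, ← Finset.sum_mul, ← es_one A x] at h3
  push_cast at h3 ⊢
  linarith [h3]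

lemma es_pos {A : Finset ι} {j : ℕ} {x : ι → ℝ} (hx : ∀ i ∈ A, 0 < x i) (hj : j ≤ A.card) :
    0 < es A j x := by
  unfold es
  refine Finset.sum_pos (fun s hs => Finset.prod_pos fun i hi => hx i ((Finset.mem_powersetCard.1 hs).1 hi)) ?_
  exact Finset.powersetCard_nonempty.2 hj

lemma Gam_mono {A : Finset ι} {m m' : ℕ} (h : m' ≤ m) : Gam A m ⊆ Gam A m' :=
  fun x hx j h1 h2 => hx j h1 (h2.trans h)

lemma Gam_smul {A : Finset ι} {m : ℕ} {c : ℝ} (hc : 0 < c) {x : ι → ℝ} (hx : x ∈ Gam A m) :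
    c • x ∈ Gam A m := fun j h1 h2 => by
  rw [es_smul]
  exact mul_pos (pow_pos hc j) (hx j h1 h2)

lemma card_ge_of_mem_Gam {A : Finset ι} {m : ℕ} {x : ι → ℝ} (hx : x ∈ Gam A m) (hm : 1 ≤ m) :
    m ≤ A.card := by
  by_contra h
  have := hx m hm le_rfl
  rw [es_of_card_lt (by omega)] at this
  exact lt_irrefl 0 this


open Polynomial in
lemma splits_derivative (p : ℝ[X]) (hp : Splits p) :
    Splits (derivative p) := by
  by_cases h0 : derivative p = 0
  · rw [h0]; exact Splits.zero
  have hdeg : p.natDegree ≠ 0 := by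
    intro h
    rw [p.eq_C_of_natDegree_eq_zero h] at h0
    simp at h0
  rw [splits_iff_card_roots] at hp ⊢
  have h1 := card_roots_le_derivative p
  have h2 := card_roots' (derivative p)
  have h3 : (derivative p).natDegree < p.natDegree := natDegree_derivative_lt hdeg
  omega

open Polynomial in
lemma prod_sq_ineq (s : Multiset ℝ) (t : ℝ) :
    eval t (derivative (derivative (s.map (fun a => X - C a)).prod)) *
      eval t (s.map (fun a => X - C a)).prod
      ≤ (eval t (derivative (s.map (fun a => X - C a)).prod)) ^ 2 := by
  induction s using Multiset.induction with
  | empty => simp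
  | cons a s ih =>
    rw [Multiset.map_cons, Multiset.prod_cons]
    set g := (s.map (fun a => X - C a)).prod with hg
    have hD : derivative ((X - C a) * g) = g + (X - C a) * derivative g := by
      rw [derivative_mul]
      simp
    have hD2 : derivative (derivative ((X - C a) * g))
        = 2 * derivative g + (X - C a) * derivative (derivative g) := by
      rw [hD, derivative_add, derivative_mul]
      simp
      ring
    rw [hD2, hD]
    simp only [eval_add, eval_mul, eval_sub, eval_X, eval_C, eval_ofNat]
    nlinarith [ih, sq_nonneg (t - a), sq_nonneg (eval t g),
      mul_le_mul_of_nonneg_left ih (sq_nonneg (t - a))]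

open Polynomial in
lemma split_sq_ineq (p : ℝ[X]) (hp : Splits p) (t : ℝ) :
    eval t (derivative (derivative p)) * eval t p ≤ (eval t (derivative p)) ^ 2 := by
  have hrep := hp.eq_prod_roots
  have h1 : eval t (derivative (derivative p)) * eval t p
      = (p.leadingCoeff) ^ 2 * (eval t (derivative (derivative (p.roots.map (fun a => X - C a)).prod)) *
          eval t (p.roots.map (fun a => X - C a)).prod) := by
    conv_lhs => rw [hrep]
    rw [derivative_C_mul, derivative_C_mul]
    simp only [eval_mul, eval_C]
    ring
  have h2 : (eval t (derivative p)) ^ 2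
      = (p.leadingCoeff) ^ 2 * (eval t (derivative (p.roots.map (fun a => X - C a)).prod)) ^ 2 := by
    conv_lhs => rw [hrep]
    rw [derivative_C_mul]
    simp only [eval_mul, eval_C]
    ring
  rw [h1, h2]
  exact mul_le_mul_of_nonneg_left (prod_sq_ineq _ t) (sq_nonneg _)

open Polynomial in
lemma newton_zero {A : Finset ι} {x : ι → ℝ} {r : ℕ} (hr : 1 ≤ r)
    (h1 : 0 < es A (r - 1) x) (h2 : es A r x = 0) : es A (r + 1) x ≤ 0 := by
  by_cases hcard : A.card < r + 1
  · rw [es_of_card_lt hcard]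
  push_neg at hcard
  set N := A.card with hN
  set P : ℝ[X] := ∏ i ∈ A, (X + C (x i)) with hP
  have hco : ∀ j, j ≤ N → P.coeff (N - j) = es A j x := by
    intro j hj
    rw [hP, Finset.prod_X_add_C_coeff _ _ (Nat.sub_le _ _)]
    rw [show N - (N - j) = j by omega]
    rfl
  have hsplits : Splits P := by
    apply Splits.prod
    intro i _
    have hrw : (X + C (x i)) = X - C (-(x i)) := by
      rw [map_neg, sub_neg_eq_add]
    rw [hrw]
    exact Splits.X_sub_C _
  set d := N - (r + 1) with hd
  set q := (⇑derivative)^[d] P with hq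
  have hqsplits : Splits q := by
    have hgen : ∀ (k : ℕ) (p : ℝ[X]), Splits p →
        Splits ((⇑derivative)^[k] p) := by
      intro k
      induction k with
      | zero => intro p hp; exact hp
      | succ k ihk =>
        intro p hp
        rw [Function.iterate_succ_apply]
        exact ihk _ (splits_derivative p hp)
    exact hgen d P hsplits
  have hc0 : q.coeff 0 = ((0 + d).descFactorial d : ℝ) * es A (r + 1) x := by
    rw [hq, Polynomial.coeff_iterate_derivative, nsmul_eq_mul]
    congr 1
    rw [show 0 + d = N - (r + 1) by omega]
    exact hco (r + 1) (by omega)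
  have hc1 : q.coeff 1 = ((1 + d).descFactorial d : ℝ) * es A r x := by
    rw [hq, Polynomial.coeff_iterate_derivative, nsmul_eq_mul]
    congr 1
    rw [show 1 + d = N - r by omega]
    exact hco r (by omega)
  have hc2 : q.coeff 2 = ((2 + d).descFactorial d : ℝ) * es A (r - 1) x := by
    rw [hq, Polynomial.coeff_iterate_derivative, nsmul_eq_mul]
    congr 1
    rw [show 2 + d = N - (r - 1) by omega]
    exact hco (r - 1) (by omega)
  have he0 : q.eval 0 = q.coeff 0 := (coeff_zero_eq_eval_zero q).symm
  have he1 : (derivative q).eval 0 = q.coeff 1 := by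
    rw [← coeff_zero_eq_eval_zero, coeff_derivative]
    simp
  have he2 : (derivative (derivative q)).eval 0 = 2 * q.coeff 2 := by
    rw [← coeff_zero_eq_eval_zero, coeff_derivative, coeff_derivative]
    push_cast
    ring
  have key := split_sq_ineq q hqsplits 0
  rw [he0, he1, he2, hc0, hc1, hc2, h2] at key
  have hc0pos : (0:ℝ) < ((0 + d).descFactorial d : ℕ) := by
    have : (0 + d).descFactorial d ≠ 0 := by
      rw [Ne, Nat.descFactorial_eq_zero_iff_lt]
      omega
    exact_mod_cast Nat.pos_of_ne_zero this
  have hc2pos : (0:ℝ) < ((2 + d).descFactorial d : ℕ) := by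
    have : (2 + d).descFactorial d ≠ 0 := by
      rw [Ne, Nat.descFactorial_eq_zero_iff_lt]
      omega
    exact_mod_cast Nat.pos_of_ne_zero this
  by_contra hpos
  push_neg at hpos
  have h5 : 0 < 2 * (((2 + d).descFactorial d : ℕ) * es A (r - 1) x)
      * (((0 + d).descFactorial d : ℕ) * es A (r + 1) x) :=
    mul_pos (mul_pos two_pos (mul_pos hc2pos h1)) (mul_pos hc0pos hpos)
  nlinarith [key, h5]


lemma es_pos_of_mem_Gam {A : Finset ι} {m : ℕ} {x : ι → ℝ} (hx : x ∈ Gam A m) :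
    0 < es A m x := by
  cases m with
  | zero => rw [es_zero]; exact one_pos
  | succ m => exact hx (m + 1) (Nat.succ_le_succ (Nat.zero_le _)) le_rfl

lemma convex_comb_pos {a b u v : ℝ} (ha : 0 ≤ a) (hb : 0 ≤ b) (hab : a + b = 1)
    (hu : 0 < u) (hv : 0 < v) : 0 < a * u + b * v := by
  rcases ha.eq_or_lt with rfl | ha'
  · have hb1 : b = 1 := by linarith
    simp [hb1, hv]
  · exact add_pos_of_pos_of_nonneg (mul_pos ha' hu) (mul_nonneg hb hv.le)

lemma es_one_add (A : Finset ι) (a b : ℝ) (x y : ι → ℝ) :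
    es A 1 (a • x + b • y) = a * es A 1 x + b * es A 1 y := by
  simp only [es_one, Pi.add_apply, Pi.smul_apply, smul_eq_mul, Finset.sum_add_distrib,
    Finset.mul_sum]

lemma Gam_zero (A : Finset ι) : Gam A 0 = Set.univ := by
  ext x
  simp only [Gam, Set.mem_setOf_eq, Set.mem_univ, iff_true]
  intro j h1 h2
  omega

lemma sq_div_comb {a b u v wx wy : ℝ} (ha : 0 ≤ a) (hb : 0 ≤ b)
    (hwx : 0 < wx) (hwy : 0 < wy) :
    (a * u + b * v) ^ 2 / (a * wx + b * wy) ≤ a * (u ^ 2 / wx) + b * (v ^ 2 / wy) := by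
  rcases eq_or_lt_of_le (by positivity : (0:ℝ) ≤ a * wx + b * wy) with h0 | hW
  · rw [← h0, div_zero]
    positivity
  rw [div_le_iff₀ hW, ← sub_nonneg]
  have expand : (a * (u ^ 2 / wx) + b * (v ^ 2 / wy)) * (a * wx + b * wy) - (a * u + b * v) ^ 2
      = a * b * (u * wy - v * wx) ^ 2 / (wx * wy) := by
    field_simp
    ring
  rw [expand]
  positivity

lemma es_add_single {A : Finset ι} {i : ι} (hiA : i ∈ A) (j : ℕ) (x : ι → ℝ) (M : ℝ) :
    es A (j + 1) (x + M • (fun t => if t = i then (1:ℝ) else 0))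
      = es A (j + 1) x + M * es (A.erase i) j x := by
  set y := x + M • (fun t => if t = i then (1:ℝ) else 0) with hy
  have hcongr : ∀ j', es (A.erase i) j' y = es (A.erase i) j' x := by
    intro j'
    refine es_congr fun t ht => ?_
    have hti : t ≠ i := Finset.ne_of_mem_erase ht
    simp [hy, hti]
  have hyi : y i = x i + M := by simp [hy]
  rw [es_erase hiA j y, es_erase hiA j x, hcongr, hcongr, hyi]
  ring

lemma ratio_eq {A : Finset ι} {m : ℕ} {v : ι → ℝ} (h : es A (m + 1) v ≠ 0) :
    es A (m + 2) v / es A (m + 1) v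
      = (es A 1 v - ∑ i ∈ A, (v i) ^ 2 * (es (A.erase i) m v / es A (m + 1) v)) / ((m : ℝ) + 2) := by
  have hk := key_identity A m v
  have hS : ∑ i ∈ A, (v i) ^ 2 * (es (A.erase i) m v / es A (m + 1) v)
      = (∑ i ∈ A, (v i) ^ 2 * es (A.erase i) m v) / es A (m + 1) v := by
    rw [Finset.sum_div]
    exact Finset.sum_congr rfl fun i _ => (mul_div_assoc _ _ _).symm
  rw [hS]
  have hm2 : ((m : ℝ) + 2) ≠ 0 := by positivity
  field_simp
  linear_combination -hk

lemma main_induction (m : ℕ) :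
    (∀ A : Finset ι, ConcaveOn ℝ (Gam A m) (fun x => es A (m + 1) x / es A m x))
    ∧ (∀ A : Finset ι, Convex ℝ (Gam A m))
    ∧ (∀ (A : Finset ι) (i : ι) (x : ι → ℝ), i ∈ A → x ∈ Gam A m → x ∈ Gam (A.erase i) (m - 1)) := by
  induction m with
  | zero =>
    refine ⟨fun A => ?_, fun A => ?_, fun A i x hiA hx => ?_⟩
    · constructor
      · rw [Gam_zero]; exact convex_univ
      · intro x _ y _ a b ha hb hab
        simp only [es_zero, div_one, smul_eq_mul]
        rw [es_one_add]
    · rw [Gam_zero]; exact convex_univ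
    · intro j h1 h2; omega
  | succ m ih =>
    obtain ⟨ihQ, ihC, ihR⟩ := ih
    -- Convexity of Gam A (m+1)
    have hC1 : ∀ A : Finset ι, Convex ℝ (Gam A (m + 1)) := by
      intro A x hx y hy a b ha hb hab
      have hxm : x ∈ Gam A m := Gam_mono (Nat.le_succ m) hx
      have hym : y ∈ Gam A m := Gam_mono (Nat.le_succ m) hy
      have hzm : a • x + b • y ∈ Gam A m := ihC A hxm hym ha hb hab
      intro j h1 h2
      rcases Nat.lt_or_ge j (m + 1) with hj | hj
      · exact hzm j h1 (by omega)
      · have hjeq : j = m + 1 := by omega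
        subst hjeq
        have hq := (ihQ A).2 hxm hym ha hb hab
        have hqx : 0 < es A (m + 1) x / es A m x :=
          div_pos (hx (m + 1) (by omega) le_rfl) (es_pos_of_mem_Gam hxm)
        have hqy : 0 < es A (m + 1) y / es A m y :=
          div_pos (hy (m + 1) (by omega) le_rfl) (es_pos_of_mem_Gam hym)
        have hcomb : 0 < a * (es A (m + 1) x / es A m x) + b * (es A (m + 1) y / es A m y) :=
          convex_comb_pos ha hb hab hqx hqy
        have hzmes : 0 < es A m (a • x + b • y) := es_pos_of_mem_Gam hzm
        have : 0 < es A (m + 1) (a • x + b • y) / es A m (a • x + b • y) := by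
          simp only [smul_eq_mul] at hq
          linarith
        calc (0:ℝ) < (es A (m + 1) (a • x + b • y) / es A m (a • x + b • y))
              * es A m (a • x + b • y) := mul_pos this hzmes
          _ = es A (m + 1) (a • x + b • y) := by
              field_simp
    -- Restriction property at level m+1
    have hR1 : ∀ (A : Finset ι) (i : ι) (x : ι → ℝ), i ∈ A → x ∈ Gam A (m + 1) →
        x ∈ Gam (A.erase i) m := by
      intro A i x hiA hx
      have hxm : x ∈ Gam A m := Gam_mono (Nat.le_succ m) hx
      intro j h1 h2
      rcases Nat.lt_or_ge j m with hj | hj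
      · exact ihR A i x hiA hxm j h1 (by omega)
      have hjeq : j = m := by omega
      rw [hjeq]
      have hm1 : 1 ≤ m := by omega
      have hmcard : m + 1 ≤ A.card := card_ge_of_mem_Gam hx (by omega)
      -- weak nonnegativity of es (A.erase i) m x
      have hweak : 0 ≤ es (A.erase i) m x := by
        have hall : ∀ M : ℝ, 0 < M →
            0 ≤ es A (m + 1) x + M * es (A.erase i) m x := by
          intro M hM
          rw [← es_add_single hiA m x M]
          set g : ℝ → ι → ℝ := fun δ => fun t => (if t = i then (1:ℝ) else 0) + δ with hgdef
          have hgmem : ∀ δ : ℝ, 0 < δ → (g δ) ∈ Gam A (m + 1) := by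
            intro δ hδ j' h1' h2'
            refine es_pos (fun t _ => ?_) (h2'.trans hmcard)
            by_cases hti : t = i <;> simp [hgdef, hti] <;> linarith
          have hzmem : ∀ δ : ℝ, 0 < δ → x + M • (g δ) ∈ Gam A (m + 1) := by
            intro δ hδ
            have h2x : (2:ℝ) • x ∈ Gam A (m + 1) := Gam_smul two_pos hx
            have h2g : (2 * M) • (g δ) ∈ Gam A (m + 1) :=
              Gam_smul (by linarith) (hgmem δ hδ)
            have heq : x + M • (g δ)
                = (1/2 : ℝ) • ((2:ℝ) • x) + (1/2 : ℝ) • ((2 * M) • (g δ)) := by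
              module
            rw [heq]
            exact hC1 A h2x h2g (by norm_num) (by norm_num) (by norm_num)
          -- continuity in δ
          have hF : Continuous (fun δ : ℝ => es A (m + 1) (x + M • (g δ))) := by
            unfold es
            apply continuous_finset_sum
            intro s _
            apply continuous_finset_prod
            intro t _
            simp only [Pi.add_apply, Pi.smul_apply, smul_eq_mul, hgdef]
            exact continuous_const.add (continuous_const.mul
              (continuous_const.add continuous_id))
          have hg0 : x + M • (g 0) = x + M • (fun t => if t = i then (1:ℝ) else 0) := by
            funext t
            simp [hgdef]
          have htend : Filter.Tendsto (fun δ : ℝ => es A (m + 1) (x + M • (g δ)))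
              (nhdsWithin 0 (Set.Ioi 0)) (nhds (es A (m + 1) (x + M • (g 0)))) :=
            (hF.tendsto 0).mono_left nhdsWithin_le_nhds
          have hev : ∀ δ ∈ Set.Ioi (0:ℝ), 0 ≤ es A (m + 1) (x + M • (g δ)) := by
            intro δ hδ
            exact (hzmem δ hδ (m + 1) (by omega) le_rfl).le
          have := ge_of_tendsto htend (Filter.eventually_iff_exists_mem.2
            ⟨Set.Ioi 0, self_mem_nhdsWithin, hev⟩)
          rw [hg0] at this
          exact this
        by_contra hneg
        push_neg at hneg
        have hpos1 : 0 < es A (m + 1) x := hx (m + 1) (by omega) le_rfl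
        set M := (es A (m + 1) x + 1) / (-es (A.erase i) m x) with hMdef
        have hMpos : 0 < M := div_pos (by linarith) (by linarith)
        have hne : es (A.erase i) m x ≠ 0 := ne_of_lt hneg
        have hMeq : M * es (A.erase i) m x = -(es A (m + 1) x + 1) := by
          rw [hMdef]
          field_simp
        have := hall M hMpos
        rw [hMeq] at this
        linarith
      -- strictness via Newton
      rcases hweak.lt_or_eq with hlt | heq
      · exact hlt
      exfalso
      have hprev : 0 < es (A.erase i) (m - 1) x := by
        rcases Nat.lt_or_ge 1 m with hm2 | hm2
        · exact ihR A i x hiA hxm (m - 1) (by omega) (by omega)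
        · have : m = 1 := by omega
          subst this
          rw [es_zero]
          exact one_pos
      have hnewt := newton_zero (A := A.erase i) (x := x) (r := m) hm1 hprev heq.symm
      have hsplit := es_erase hiA m x
      have hpos1 : 0 < es A (m + 1) x := hx (m + 1) (by omega) le_rfl
      rw [← heq] at hsplit
      have : es A (m + 1) x = es (A.erase i) (m + 1) x := by linarith [hsplit]
      linarith [hnewt, hpos1, this]
    refine ⟨?_, hC1, hR1⟩
    intro A
    refine ⟨hC1 A, ?_⟩
    intro x hx y hy a b ha hb hab
    set z := a • x + b • y with hzdef
    have hz : z ∈ Gam A (m + 1) := hC1 A hx hy ha hb hab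
    have hex : (0:ℝ) < es A (m + 1) x := hx (m + 1) (by omega) le_rfl
    have hey : (0:ℝ) < es A (m + 1) y := hy (m + 1) (by omega) le_rfl
    have hez : (0:ℝ) < es A (m + 1) z := hz (m + 1) (by omega) le_rfl
    -- termwise inequality for the correction terms
    have hterm : ∀ i ∈ A,
        (z i) ^ 2 * (es (A.erase i) m z / es A (m + 1) z)
          ≤ a * ((x i) ^ 2 * (es (A.erase i) m x / es A (m + 1) x))
            + b * ((y i) ^ 2 * (es (A.erase i) m y / es A (m + 1) y)) := by
      intro i hiA
      have hxr : x ∈ Gam (A.erase i) m := hR1 A i x hiA hx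
      have hyr : y ∈ Gam (A.erase i) m := hR1 A i y hiA hy
      have hzr : z ∈ Gam (A.erase i) m := hR1 A i z hiA hz
      have hexr : 0 < es (A.erase i) m x := es_pos_of_mem_Gam hxr
      have heyr : 0 < es (A.erase i) m y := es_pos_of_mem_Gam hyr
      have hezr : 0 < es (A.erase i) m z := es_pos_of_mem_Gam hzr
      -- the "w" quantities
      set wx := es A (m + 1) x / es (A.erase i) m x with hwx
      set wy := es A (m + 1) y / es (A.erase i) m y with hwy
      set wz := es A (m + 1) z / es (A.erase i) m z with hwz
      have hwxpos : 0 < wx := div_pos hex hexr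
      have hwypos : 0 < wy := div_pos hey heyr
      have hwzpos : 0 < wz := div_pos hez hezr
      -- T in terms of w
      have hT : ∀ (v : ι → ℝ),
          (v i) ^ 2 * (es (A.erase i) m v / es A (m + 1) v)
            = (v i) ^ 2 / (es A (m + 1) v / es (A.erase i) m v) := by
        intro v
        rw [div_eq_mul_inv ((v i)^2), inv_div]
      -- concavity of w
      have hwsplit : ∀ (v : ι → ℝ), 0 < es (A.erase i) m v →
          es A (m + 1) v / es (A.erase i) m v
            = v i + es (A.erase i) (m + 1) v / es (A.erase i) m v := by
        intro v hv
        rw [es_erase hiA m v]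
        field_simp
        ring
      have hr := (ihQ (A.erase i)).2 hxr hyr ha hb hab
      simp only [smul_eq_mul] at hr
      have hwcomb : a * wx + b * wy ≤ wz := by
        rw [hwx, hwy, hwz, hwsplit x hexr, hwsplit y heyr, hwsplit z hezr]
        have hzi : z i = a * x i + b * y i := by simp [hzdef]
        rw [hzi]
        have := hr
        nlinarith [hr]
      have hWpos : 0 < a * wx + b * wy := convex_comb_pos ha hb hab hwxpos hwypos
      rw [hT x, hT y, hT z, ← hwx, ← hwy, ← hwz]
      have hzi : z i = a * x i + b * y i := by simp [hzdef]
      calc (z i) ^ 2 / wz ≤ (z i) ^ 2 / (a * wx + b * wy) := by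
            apply div_le_div_of_nonneg_left (sq_nonneg _) hWpos hwcomb
        _ ≤ a * ((x i) ^ 2 / wx) + b * ((y i) ^ 2 / wy) := by
            rw [hzi]
            exact sq_div_comb ha hb hwxpos hwypos
    have hsum : ∑ i ∈ A, (z i) ^ 2 * (es (A.erase i) m z / es A (m + 1) z)
        ≤ a * (∑ i ∈ A, (x i) ^ 2 * (es (A.erase i) m x / es A (m + 1) x))
          + b * (∑ i ∈ A, (y i) ^ 2 * (es (A.erase i) m y / es A (m + 1) y)) := by
      rw [Finset.mul_sum, Finset.mul_sum, ← Finset.sum_add_distrib]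
      exact Finset.sum_le_sum hterm
    have hrx := ratio_eq (A := A) (m := m) (v := x) hex.ne'
    have hry := ratio_eq (A := A) (m := m) (v := y) hey.ne'
    have hrz := ratio_eq (A := A) (m := m) (v := z) hez.ne'
    have hes1 : es A 1 z = a * es A 1 x + b * es A 1 y := es_one_add A a b x y
    simp only [smul_eq_mul]
    rw [show m + 1 + 1 = m + 2 from rfl, hrx, hry, hrz,
      ← mul_div_assoc, ← mul_div_assoc, ← add_div]
    have hm2pos : (0:ℝ) < (m : ℝ) + 2 := by positivity
    gcongr
    nlinarith [hsum, hes1]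

section Analysis

variable [Fintype ι]

lemma differentiable_prod_coords (s : Finset ι) :
    Differentiable ℝ (fun y : ι → ℝ => ∏ i ∈ s, y i) := by
  classical
  induction s using Finset.induction_on with
  | empty =>
    simp only [Finset.prod_empty]
    exact differentiable_const 1
  | insert a s' hi ih =>
    have : (fun y : ι → ℝ => ∏ i ∈ insert a s', y i)
        = fun y : ι → ℝ => y a * ∏ i ∈ s', y i := by
      funext y
      rw [Finset.prod_insert hi]
    rw [this]
    exact ((ContinuousLinearMap.proj a : (ι → ℝ) →L[ℝ] ℝ).differentiable).mul ih

lemma differentiable_es (A : Finset ι) (j : ℕ) :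
    Differentiable ℝ (fun x : ι → ℝ => es A j x) := by
  unfold es
  apply Differentiable.fun_sum
  intro s _
  exact differentiable_prod_coords s

lemma line_hasDerivAt (x v : ι → ℝ) :
    HasDerivAt (fun t : ℝ => x + t • v) v 0 := by
  have h1 : HasDerivAt (fun t : ℝ => t • v) ((1:ℝ) • v) 0 :=
    (hasDerivAt_id 0).smul_const v
  simpa using h1.const_add x

lemma comp_line_hasDerivAt {g : (ι → ℝ) → ℝ} {x : ι → ℝ} (v : ι → ℝ)
    (hd : DifferentiableAt ℝ g x) :
    HasDerivAt (fun t : ℝ => g (x + t • v)) (fderiv ℝ g x v) 0 := by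
  have h0 : x + (0:ℝ) • v = x := by simp
  have hfd : HasFDerivAt g (fderiv ℝ g x) (x + (0:ℝ) • v) := by
    rw [h0]; exact hd.hasFDerivAt
  exact hfd.comp_hasDerivAt 0 (line_hasDerivAt x v)

lemma fderiv_le_of_convexOn {S : Set (ι → ℝ)} {g : (ι → ℝ) → ℝ} (hg : ConvexOn ℝ S g)
    {x y : ι → ℝ} (hx : x ∈ S) (hy : y ∈ S) (hd : DifferentiableAt ℝ g x) :
    fderiv ℝ g x (y - x) ≤ g y - g x := by
  have hφ := comp_line_hasDerivAt (y - x) hd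
  have hslope := hasDerivAt_iff_tendsto_slope.1 hφ
  have hmono : nhdsWithin (0:ℝ) (Set.Ioi 0) ≤ nhdsWithin 0 {(0:ℝ)}ᶜ :=
    nhdsWithin_mono 0 (fun t ht => Set.mem_compl_singleton_iff.2 (ne_of_gt ht))
  have hslope' := hslope.mono_left hmono
  refine le_of_tendsto hslope' ?_
  refine Filter.eventually_iff_exists_mem.2 ⟨Set.Ioo 0 1,
    Ioo_mem_nhdsGT_of_mem ⟨le_refl 0, zero_lt_one⟩, fun t ht => ?_⟩
  have ht0 : 0 < t := ht.1
  have ht1 : t ≤ 1 := ht.2.le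
  have hcomb : x + t • (y - x) = (1 - t) • x + t • y := by module
  have hineq := hg.2 hx hy (by linarith : (0:ℝ) ≤ 1 - t) ht0.le (by ring)
  rw [← hcomb] at hineq
  simp only [smul_eq_mul] at hineq
  rw [slope_def_field]
  simp only [sub_zero]
  rw [div_le_iff₀ ht0]
  have h0 : x + (0:ℝ) • (y - x) = x := by simp
  rw [h0]
  nlinarith [hineq]

lemma fderiv_ge_of_concaveOn {S : Set (ι → ℝ)} {g : (ι → ℝ) → ℝ} (hg : ConcaveOn ℝ S g)
    {x y : ι → ℝ} (hx : x ∈ S) (hy : y ∈ S) (hd : DifferentiableAt ℝ g x) :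
    g y - g x ≤ fderiv ℝ g x (y - x) := by
  have hφ := comp_line_hasDerivAt (y - x) hd
  have hslope := hasDerivAt_iff_tendsto_slope.1 hφ
  have hmono : nhdsWithin (0:ℝ) (Set.Ioi 0) ≤ nhdsWithin 0 {(0:ℝ)}ᶜ :=
    nhdsWithin_mono 0 (fun t ht => Set.mem_compl_singleton_iff.2 (ne_of_gt ht))
  have hslope' := hslope.mono_left hmono
  refine ge_of_tendsto hslope' ?_
  refine Filter.eventually_iff_exists_mem.2 ⟨Set.Ioo 0 1,
    Ioo_mem_nhdsGT_of_mem ⟨le_refl 0, zero_lt_one⟩, fun t ht => ?_⟩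
  have ht0 : 0 < t := ht.1
  have ht1 : t ≤ 1 := ht.2.le
  have hcomb : x + t • (y - x) = (1 - t) • x + t • y := by module
  have hineq := hg.2 hx hy (by linarith : (0:ℝ) ≤ 1 - t) ht0.le (by ring)
  rw [← hcomb] at hineq
  simp only [smul_eq_mul] at hineq
  rw [slope_def_field]
  simp only [sub_zero]
  rw [le_div_iff₀ ht0]
  have h0 : x + (0:ℝ) • (y - x) = x := by simp
  rw [h0]
  nlinarith [hineq]

lemma euler_ratio (A : Finset ι) (j j' : ℕ) (x : ι → ℝ) (h0 : es A j' x ≠ 0) :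
    fderiv ℝ (fun v => es A j v / es A j' v) x x
      = ((j : ℝ) - (j' : ℝ)) * (es A j x / es A j' x) := by
  have hdiff : DifferentiableAt ℝ (fun v => es A j v / es A j' v) x := by
    have hinv : DifferentiableAt ℝ (fun v => (es A j' v)⁻¹) x :=
      (differentiableAt_inv h0).comp x ((differentiable_es A j') x)
    simp only [div_eq_mul_inv]
    exact ((differentiable_es A j) x).mul hinv
  have hline : HasDerivAt (fun t : ℝ => t • x) x 1 := by
    simpa using (hasDerivAt_id (1:ℝ)).smul_const x
  have hφ : HasDerivAt (fun t : ℝ => es A j (t • x) / es A j' (t • x))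
      (fderiv ℝ (fun v => es A j v / es A j' v) x x) 1 := by
    have h1 : (1:ℝ) • x = x := one_smul _ _
    have hfd : HasFDerivAt (fun v => es A j v / es A j' v)
        (fderiv ℝ (fun v => es A j v / es A j' v) x) ((1:ℝ) • x) := by
      rw [h1]; exact hdiff.hasFDerivAt
    exact hfd.comp_hasDerivAt 1 hline
  have hψ : HasDerivAt (fun t : ℝ => t ^ ((j:ℤ) - (j':ℤ)) * (es A j x / es A j' x))
      ((((j:ℤ) - (j':ℤ) : ℤ) : ℝ) * (es A j x / es A j' x)) 1 := by
    have := (hasDerivAt_zpow ((j:ℤ) - (j':ℤ)) 1 (Or.inl one_ne_zero)).mul_const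
      (es A j x / es A j' x)
    simpa using this
  have hev : (fun t : ℝ => t ^ ((j:ℤ) - (j':ℤ)) * (es A j x / es A j' x))
      =ᶠ[nhds 1] (fun t : ℝ => es A j (t • x) / es A j' (t • x)) := by
    have hmem : {t : ℝ | t ≠ 0} ∈ nhds (1:ℝ) := isOpen_ne.mem_nhds one_ne_zero
    filter_upwards [hmem] with t ht
    rw [es_smul, es_smul, mul_div_mul_comm, zpow_sub₀ ht, zpow_natCast, zpow_natCast]
  have huniq := hφ.unique (hψ.congr_of_eventuallyEq hev.symm)
  rw [huniq]
  push_cast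
  ring

lemma differentiableAt_es_ratio {A : Finset ι} {j j' : ℕ} {x : ι → ℝ}
    (h0 : es A j' x ≠ 0) :
    DifferentiableAt ℝ (fun v => es A j v / es A j' v) x := by
  have hinv : DifferentiableAt ℝ (fun v => (es A j' v)⁻¹) x :=
    (differentiableAt_inv h0).comp x ((differentiable_es A j') x)
  simp only [div_eq_mul_inv]
  exact ((differentiable_es A j) x).mul hinv

lemma concaveOn_log_comp {S : Set (ι → ℝ)} {g : (ι → ℝ) → ℝ} (hg : ConcaveOn ℝ S g)
    (hpos : ∀ v ∈ S, 0 < g v) :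
    ConcaveOn ℝ S (fun v => Real.log (g v)) := by
  refine ⟨hg.1, fun x hx y hy a b ha hb hab => ?_⟩
  have hgx := hpos x hx
  have hgy := hpos y hy
  have h1 := (strictConcaveOn_log_Ioi.concaveOn).2 (Set.mem_Ioi.2 hgx) (Set.mem_Ioi.2 hgy)
    ha hb hab
  have h2 : a * g x + b * g y ≤ g (a • x + b • y) := by
    have := hg.2 hx hy ha hb hab
    simpa [smul_eq_mul] using this
  have h3 : Real.log (a * g x + b * g y) ≤ Real.log (g (a • x + b • y)) :=
    Real.log_le_log (convex_comb_pos ha hb hab hgx hgy) h2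
  simp only [smul_eq_mul] at h1 ⊢
  linarith [h1, h3]

lemma concaveOn_finset_sum {S : Set (ι → ℝ)} (hS : Convex ℝ S) (t : Finset ℕ)
    (f : ℕ → (ι → ℝ) → ℝ) (hf : ∀ j ∈ t, ConcaveOn ℝ S (f j)) :
    ConcaveOn ℝ S (fun v => ∑ j ∈ t, f j v) := by
  classical
  induction t using Finset.induction_on with
  | empty =>
    simp only [Finset.sum_empty]
    exact concaveOn_const 0 hS
  | insert a t' hi ih =>
    have heq : (fun v => ∑ j ∈ insert a t', f j v)
        = fun v => f a v + ∑ j ∈ t', f j v := by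
      funext v
      rw [Finset.sum_insert hi]
    rw [heq]
    exact (hf a (Finset.mem_insert_self _ _)).add
      (ih (fun j hj => hf j (Finset.mem_insert_of_mem hj)))

lemma convexOn_es_ratio (A : Finset ι) (l K : ℕ) (hlK : l ≤ K) (hK : 1 ≤ K) :
    ConvexOn ℝ (Gam A K) (fun v => es A l v / es A K v) := by
  have hconv : Convex ℝ (Gam A K) := (main_induction K).2.1 A
  set L : (ι → ℝ) → ℝ := fun v => ∑ j ∈ Finset.Ico l K, Real.log (es A (j+1) v / es A j v)
    with hLdef
  have hLconc : ConcaveOn ℝ (Gam A K) L := by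
    apply concaveOn_finset_sum hconv
    intro j hj
    rw [Finset.mem_Ico] at hj
    have hsub : Gam A K ⊆ Gam A j := Gam_mono (by omega)
    have hQ : ConcaveOn ℝ (Gam A j) (fun v => es A (j+1) v / es A j v) :=
      (main_induction j).1 A
    have hQ' : ConcaveOn ℝ (Gam A K) (fun v => es A (j+1) v / es A j v) :=
      hQ.subset hsub hconv
    apply concaveOn_log_comp hQ'
    intro v hv
    exact div_pos (hv (j+1) (by omega) (by omega)) (es_pos_of_mem_Gam (hsub hv))
  have hrep : ∀ v ∈ Gam A K, es A l v / es A K v = Real.exp (-(L v)) := by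
    intro v hv
    have hpos : ∀ j, j ≤ K → 0 < es A j v := by
      intro j hj
      rcases Nat.eq_zero_or_pos j with rfl | hj1
      · rw [es_zero]; exact one_pos
      · exact hv j hj1 hj
    have hstep : ∀ j ∈ Finset.Ico l K, Real.log (es A (j+1) v / es A j v)
        = Real.log (es A (j+1) v) - Real.log (es A j v) := fun j hj => by
      rw [Finset.mem_Ico] at hj
      exact Real.log_div (hpos (j+1) (by omega)).ne' (hpos j (by omega)).ne'
    have htel : L v = Real.log (es A K v) - Real.log (es A l v) := by
      calc L v = ∑ j ∈ Finset.Ico l K, (Real.log (es A (j+1) v) - Real.log (es A j v)) :=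
            Finset.sum_congr rfl hstep
        _ = ∑ i ∈ Finset.range (K - l),
              (Real.log (es A (l + i + 1) v) - Real.log (es A (l + i) v)) := by
            rw [Finset.sum_Ico_eq_sum_range]
        _ = Real.log (es A (l + (K - l)) v) - Real.log (es A (l + 0) v) :=
            Finset.sum_range_sub (f := fun i => Real.log (es A (l + i) v)) (n := K - l)
        _ = Real.log (es A K v) - Real.log (es A l v) := by
            rw [Nat.add_sub_cancel' hlK, Nat.add_zero]
    rw [htel, neg_sub, Real.exp_sub, Real.exp_log (hpos K le_rfl), Real.exp_log (hpos l hlK)]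
  refine ⟨hconv, fun x hx y hy a b ha hb hab => ?_⟩
  have hz : a • x + b • y ∈ Gam A K := hconv hx hy ha hb hab
  simp only [smul_eq_mul]
  rw [hrep x hx, hrep y hy, hrep _ hz]
  have hLineq : a * L x + b * L y ≤ L (a • x + b • y) := by
    simpa [smul_eq_mul] using hLconc.2 hx hy ha hb hab
  have h1 : Real.exp (-(L (a • x + b • y))) ≤ Real.exp (-(a * L x + b * L y)) :=
    Real.exp_le_exp.2 (by linarith)
  have h2' := convexOn_exp.2 (Set.mem_univ (-(L x))) (Set.mem_univ (-(L y))) ha hb hab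
  simp only [smul_eq_mul] at h2'
  have heq2 : a * -L x + b * -L y = -(a * L x + b * L y) := by ring
  rw [heq2] at h2'
  linarith [h1, h2']

lemma grad_q_ge {A : Finset ι} {K : ℕ} (hK : 1 ≤ K) {x y : ι → ℝ}
    (hx : x ∈ Gam A K) (hy : y ∈ Gam A K) :
    es A (K+1) y / es A K y ≤ (fderiv ℝ (fun v => es A (K+1) v / es A K v) x) y := by
  have hconc : ConcaveOn ℝ (Gam A K) (fun v => es A (K+1) v / es A K v) :=
    (main_induction K).1 A
  have hne : es A K x ≠ 0 := (hx K hK le_rfl).ne'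
  have hd := differentiableAt_es_ratio (A := A) (j := K + 1) (j' := K) (x := x) hne
  have h1 := fderiv_ge_of_concaveOn hconc hx hy hd
  have h2 := euler_ratio A (K+1) K x hne
  rw [map_sub] at h1
  have h3 : ((K:ℝ) + 1) - (K:ℝ) = 1 := by ring
  rw [show (((K+1 : ℕ)):ℝ) = (K:ℝ) + 1 from by push_cast; ring, h3, one_mul] at h2
  linarith [h1, h2]

lemma grad_h_le {A : Finset ι} {K l : ℕ} (hK : 1 ≤ K) (hlK : l ≤ K) {x y : ι → ℝ}
    (hx : x ∈ Gam A K) (hy : y ∈ Gam A K) :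
    (fderiv ℝ (fun v => es A l v / es A K v) x) y
      ≤ es A l y / es A K y - (((K:ℝ) + 1) - (l:ℝ)) * (es A l x / es A K x) := by
  have hconv := convexOn_es_ratio A l K hlK hK
  have hne : es A K x ≠ 0 := (hx K hK le_rfl).ne'
  have hd := differentiableAt_es_ratio (A := A) (j := l) (j' := K) (x := x) hne
  have h1 := fderiv_le_of_convexOn hconv hx hy hd
  have h2 := euler_ratio A l K x hne
  rw [map_sub] at h1
  linarith [h1, h2]

end Analysis

end KrylovAux


/-- Inequality (2.8): for `λ, μ ∈ Γ_{k-1}` and nonnegative `β_0, …, β_{k-2}`,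
`∑ᵢ fᵢ(λ) μᵢ ≥ f(μ) + ∑_{l=0}^{k-2} (k−l) β_l σ_l(λ)/σ_{k-1}(λ)`. -/
theorem krylovF_lower_bound (n k : ℕ) (hn : 2 ≤ n) (hk : 2 ≤ k) (hkn : k ≤ n)
    (β : ℕ → ℝ) (hβ : ∀ l ≤ k - 2, 0 ≤ β l)
    (lam mu : Fin n → ℝ) (hlam : lam ∈ GammaCone n (k - 1))
    (hmu : mu ∈ GammaCone n (k - 1)) :
    ∑ i : Fin n, fderiv ℝ (krylovF n k β) lam (Pi.single i 1) * mu i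
      ≥ krylovF n k β mu
        + ∑ l ∈ Finset.range (k - 1),
            ((k : ℝ) - (l : ℝ)) * β l * (esymm n l lam / esymm n (k - 1) lam) := by
  classical
  set K := k - 1 with hKdef
  have hK1 : 1 ≤ K := by omega
  have hkK : k = K + 1 := by omega
  set A : Finset (Fin n) := Finset.univ with hA
  have hes : ∀ (j : ℕ) (v : Fin n → ℝ), esymm n j v = KrylovAux.es A j v := fun j v => rfl
  have hlam' : lam ∈ KrylovAux.Gam A K := hlam
  have hmu' : mu ∈ KrylovAux.Gam A K := hmu
  have hexK : (0:ℝ) < KrylovAux.es A K lam := hlam' K hK1 le_rfl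
  have heyK : (0:ℝ) < KrylovAux.es A K mu := hmu' K hK1 le_rfl
  have hfun : krylovF n k β = fun v => (KrylovAux.es A (K+1) v / KrylovAux.es A K v)
      - ∑ l ∈ Finset.range K, β l * (KrylovAux.es A l v / KrylovAux.es A K v) := by
    funext v
    rw [krylovF]
    simp only [hes]
    rw [hkK]
    norm_num
  have hdq : DifferentiableAt ℝ (fun v => KrylovAux.es A (K+1) v / KrylovAux.es A K v) lam :=
    KrylovAux.differentiableAt_es_ratio hexK.ne'
  have hdh : ∀ l : ℕ, DifferentiableAt ℝ
      (fun v => KrylovAux.es A l v / KrylovAux.es A K v) lam :=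
    fun l => KrylovAux.differentiableAt_es_ratio hexK.ne'
  have hdsum : DifferentiableAt ℝ
      (fun v => ∑ l ∈ Finset.range K, β l * (KrylovAux.es A l v / KrylovAux.es A K v)) lam :=
    DifferentiableAt.fun_sum (fun l _ => (hdh l).const_mul (β l))
  have hfder : fderiv ℝ (krylovF n k β) lam
      = fderiv ℝ (fun v => KrylovAux.es A (K+1) v / KrylovAux.es A K v) lam
        - ∑ l ∈ Finset.range K,
            β l • fderiv ℝ (fun v => KrylovAux.es A l v / KrylovAux.es A K v) lam := by
    rw [hfun]
    rw [fderiv_fun_sub hdq hdsum]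
    congr 1
    rw [fderiv_fun_sum (fun l _ => (hdh l).const_mul (β l))]
    exact Finset.sum_congr rfl fun l _ => fderiv_const_mul (hdh l) (β l)
  have hmu_repr : mu = ∑ i : Fin n, mu i • (Pi.single i (1:ℝ) : Fin n → ℝ) := by
    ext j
    rw [Finset.sum_apply]
    simp only [Pi.smul_apply, Pi.single_apply, smul_eq_mul, mul_ite, mul_one, mul_zero]
    rw [Finset.sum_ite_eq]
    simp
  have hLHS : ∑ i : Fin n, fderiv ℝ (krylovF n k β) lam (Pi.single i 1) * mu i
      = fderiv ℝ (krylovF n k β) lam mu := by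
    conv_rhs => rw [hmu_repr]
    rw [map_sum]
    refine Finset.sum_congr rfl fun i _ => ?_
    rw [map_smul]
    simp [smul_eq_mul, mul_comm]
  have hq := KrylovAux.grad_q_ge (A := A) hK1 hlam' hmu'
  have hcastK : ((K:ℝ) + 1) = (k:ℝ) := by rw [hkK]; push_cast; ring
  have hsum2 : ∑ l ∈ Finset.range K,
        β l * ((fderiv ℝ (fun v => KrylovAux.es A l v / KrylovAux.es A K v) lam) mu)
      ≤ ∑ l ∈ Finset.range K,
        (β l * (KrylovAux.es A l mu / KrylovAux.es A K mu)
          - ((k:ℝ) - l) * β l * (KrylovAux.es A l lam / KrylovAux.es A K lam)) := by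
    refine Finset.sum_le_sum fun l hl => ?_
    rw [Finset.mem_range] at hl
    have hb : 0 ≤ β l := hβ l (by omega)
    have hgl := KrylovAux.grad_h_le (A := A) (l := l) hK1 (by omega) hlam' hmu'
    rw [hcastK] at hgl
    have h2 := mul_le_mul_of_nonneg_left hgl hb
    nlinarith [h2]
  rw [ge_iff_le, hLHS, hfder]
  simp only [ContinuousLinearMap.sub_apply, ContinuousLinearMap.sum_apply,
    ContinuousLinearMap.smul_apply, smul_eq_mul]
  rw [hfun]
  simp only [hes]
  rw [Finset.sum_sub_distrib] at hsum2
  have hfsum : ∑ l ∈ Finset.range K, ((k:ℝ) - l) * β l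
      * (KrylovAux.es A l lam / KrylovAux.es A K lam)
      = ∑ l ∈ Finset.range K, ((k:ℝ) - l) * β l
      * (KrylovAux.es A l lam / KrylovAux.es A K lam) := rfl
  linarith [hq, hsum2]
end

section
/- (Lemma 2.13, inequality (2.9).) Let n ≥ 2 and 2 ≤ k ≤ n. There exists a constant C > 0, depending only on n and k, with the following property: if λ ∈ Γ_{k-1}, β_0,…,β_{k-2} are nonnegative real numbers and β_{k-1} ∈ ℝ satisfy σ_k(λ)/σ_{k-1}(λ) = Σ_{l=0}^{k-2} β_l · σ_l(λ)/σ_{k-1}(λ) + β_{k-1}, then for every l with 0 ≤ l ≤ k−2 and β_l > 0 one has 0 < σ_l(λ)/σ_{k-1}(λ) ≤ max{ (1 + |β_{k-1}|)/β_l , C }. -/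
lemma esymm_eq_multiset (n k : ℕ) (lam : Fin n → ℝ) :
    esymm n k lam = (Multiset.map lam (Finset.univ : Finset (Fin n)).val).esymm k := by
  rw [Finset.esymm_map_val]; rfl

lemma multiset_exists_fn' (s : Multiset ℝ) (m : ℕ) (h : Multiset.card s = m) :
    ∃ nu : Fin m → ℝ, s = Multiset.map nu (Finset.univ : Finset (Fin m)).val := by
  subst h
  induction s using Quotient.inductionOn with
  | _ l =>
    refine ⟨fun i => l.get (Fin.cast rfl i), ?_⟩
    show (l : Multiset ℝ) = Multiset.map l.get (Finset.univ : Finset (Fin l.length)).val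
    have : (Finset.univ : Finset (Fin l.length)).val
        = ((List.finRange l.length : List (Fin l.length)) : Multiset (Fin l.length)) := rfl
    rw [this, Multiset.map_coe, ← List.ofFn_eq_map, List.ofFn_get]

open Polynomial in
lemma deriv_step (n : ℕ) (hn : 1 ≤ n) (lam : Fin n → ℝ) :
    ∃ nu : Fin (n-1) → ℝ, ∀ i : ℕ, i ≤ n - 1 →
      (n : ℝ) * esymm (n-1) i nu = ((n - i : ℕ) : ℝ) * esymm n i lam := by
  set t : Multiset ℝ := Multiset.map lam (Finset.univ : Finset (Fin n)).val with ht
  have hcard : Multiset.card t = n := by simp [ht]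
  set p : ℝ[X] := (t.map fun r => X - C r).prod with hp
  have hmonic : p.Monic := monic_multiset_prod_of_monic _ _ fun a _ => monic_X_sub_C a
  have hdeg : p.natDegree = n := by
    rw [hp, natDegree_multiset_prod_X_sub_C_eq_card, hcard]
  set q := derivative p with hq
  have hqtop : q.coeff (n-1) = n := by
    rw [hq, coeff_derivative]
    have h1 : n - 1 + 1 = n := Nat.succ_pred_eq_of_pos hn
    rw [h1]
    have h2 : p.coeff n = 1 := by rw [← hdeg]; exact hmonic.coeff_natDegree
    rw [h2, one_mul, Nat.cast_sub hn]
    push_cast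
    ring
  have hqdeg : q.natDegree = n - 1 := by
    refine le_antisymm ((natDegree_derivative_le p).trans (by rw [hdeg])) ?_
    exact le_natDegree_of_ne_zero (by rw [hqtop]; exact_mod_cast Nat.cast_ne_zero.2 (by omega))
  have hqroots_card : Multiset.card q.roots = n - 1 := by
    refine le_antisymm ((q.card_roots').trans (le_of_eq hqdeg)) ?_
    have h3 := p.card_roots_le_derivative
    rw [roots_multiset_prod_X_sub_C, hcard, ← hq] at h3
    omega
  have hlead : q.leadingCoeff = n := by rw [leadingCoeff, hqdeg, hqtop]
  obtain ⟨nu, hnu⟩ := multiset_exists_fn' q.roots (n-1) hqroots_card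
  refine ⟨nu, fun i hi => ?_⟩
  have h1 : q.coeff (n-1-i) = (n : ℝ) * ((-1)^i * (q.roots.esymm i)) := by
    rw [Polynomial.coeff_eq_esymm_roots_of_card (hqroots_card.trans hqdeg.symm)
      (by omega : n - 1 - i ≤ q.natDegree), hqdeg, hlead]
    have : n - 1 - (n - 1 - i) = i := by omega
    rw [this, mul_assoc]
  have h2 : q.coeff (n-1-i) = ((n - i : ℕ) : ℝ) * ((-1)^i * t.esymm i) := by
    rw [hq, coeff_derivative]
    have h4 : n - 1 - i + 1 = n - i := by omega
    rw [h4]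
    have h5 : p.coeff (n - i) = (-1)^i * t.esymm i := by
      have h6 := Multiset.prod_X_sub_C_coeff t (by omega : n - i ≤ Multiset.card t)
      rw [hcard] at h6
      have h7 : n - (n - i) = i := by omega
      rw [h7] at h6
      exact h6
    rw [h5, Nat.cast_sub (show i ≤ n - 1 by omega), Nat.cast_sub hn,
      Nat.cast_sub (show i ≤ n by omega)]
    push_cast
    ring
  have h8 : (n : ℝ) * (q.roots.esymm i) = ((n - i : ℕ) : ℝ) * t.esymm i := by
    have h9 := h1.symm.trans h2
    have h10 : ((-1 : ℝ))^i ≠ 0 := pow_ne_zero _ (by norm_num)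
    have h11 : ((n : ℝ) * q.roots.esymm i) * (-1:ℝ)^i
        = (((n - i : ℕ) : ℝ) * t.esymm i) * (-1:ℝ)^i := by linear_combination h9
    exact mul_right_cancel₀ h10 h11
  rw [esymm_eq_multiset, ← hnu, esymm_eq_multiset, ← ht]
  exact h8


open Finset in
lemma two_mul_sum_powersetCard_two {ι : Type*} [DecidableEq ι] (s : Finset ι) (f : ι → ℝ) :
    2 * ∑ u ∈ s.powersetCard 2, ∏ i ∈ u, f i
      = (∑ i ∈ s, f i)^2 - ∑ i ∈ s, (f i)^2 := by
  induction s using Finset.induction_on with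
  | empty =>
    rw [show Finset.powersetCard 2 (∅ : Finset ι) = ∅ from
      Finset.powersetCard_eq_empty.2 (by simp)]
    simp
  | @insert x s hx ih =>
    rw [Finset.powersetCard_succ_insert hx, Finset.sum_union, Finset.sum_image, Finset.powersetCard_one]
    · rw [Finset.sum_map, Finset.sum_insert hx, Finset.sum_insert hx]
      have h1 : ∀ u ∈ s.powersetCard 1, ∏ i ∈ insert x u, f i = f x * ∏ i ∈ u, f i := by
        intro u hu
        rw [Finset.mem_powersetCard] at hu
        exact Finset.prod_insert (fun hxu => hx (hu.1 hxu))
      have h2 : ∀ i ∈ s, ∏ t ∈ insert x ((⟨singleton, Finset.singleton_injective⟩ : ι ↪ Finset ι) i), f t = f x * f i := by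
        intro i hi
        show ∏ t ∈ insert x {i}, f t = f x * f i
        rw [Finset.prod_insert (by simp only [Finset.mem_singleton]; rintro rfl; exact hx hi),
          Finset.prod_singleton]
      rw [Finset.sum_congr rfl h2, ← Finset.mul_sum]
      linear_combination ih
    · intro u hu v hv huv
      rw [Finset.mem_coe, Finset.mem_powersetCard] at hu hv
      have hxu : x ∉ u := fun h => hx (hu.1 h)
      have hxv : x ∉ v := fun h => hx (hv.1 h)
      rw [← Finset.erase_insert hxu, ← Finset.erase_insert hxv, huv]
    · rw [Finset.disjoint_left]
      intro u hu h2
      rw [Finset.mem_powersetCard] at hu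
      simp only [Finset.mem_image] at h2
      obtain ⟨v, hv, rfl⟩ := h2
      exact hx (hu.1 (Finset.mem_insert_self x v))


lemma esymm_compl (n j : ℕ) (hj : j ≤ n) (lam : Fin n → ℝ) :
    esymm n j lam
      = ∑ u ∈ Finset.powersetCard (n - j) (Finset.univ : Finset (Fin n)), ∏ i ∈ uᶜ, lam i := by
  refine Finset.sum_nbij' (fun s => sᶜ) (fun u => uᶜ) ?_ ?_ ?_ ?_ ?_
  · intro s hs
    rw [Finset.mem_powersetCard_univ] at hs ⊢
    rw [Finset.card_compl, hs, Fintype.card_fin]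
  · intro u hu
    rw [Finset.mem_powersetCard_univ] at hu ⊢
    rw [Finset.card_compl, hu, Fintype.card_fin, Nat.sub_sub_self hj]
  · intro s _; exact compl_compl s
  · intro u _; exact compl_compl u
  · intro s _; rw [compl_compl]

lemma esymm_top (n : ℕ) (lam : Fin n → ℝ) : esymm n n lam = ∏ i, lam i := by
  unfold esymm
  rw [show (Finset.powersetCard n (Finset.univ : Finset (Fin n)))
      = {Finset.univ} by
    have := Finset.powersetCard_self (Finset.univ : Finset (Fin n))
    rwa [Finset.card_univ, Fintype.card_fin] at this]
  rw [Finset.sum_singleton]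

lemma esymm_pred (n : ℕ) (hn : 1 ≤ n) (lam : Fin n → ℝ) :
    esymm n (n-1) lam = ∑ i, ∏ t ∈ Finset.univ.erase i, lam t := by
  rw [esymm_compl n (n-1) (Nat.sub_le n 1) lam, Nat.sub_sub_self hn,
    Finset.powersetCard_one, Finset.sum_map]
  refine Finset.sum_congr rfl fun i _ => ?_
  congr 1
  show ({i} : Finset (Fin n))ᶜ = Finset.univ.erase i
  rw [Finset.compl_singleton]

lemma esymm_sub_two_mul_top (n : ℕ) (hn : 2 ≤ n) (lam : Fin n → ℝ) :
    esymm n (n-2) lam * esymm n n lam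
      = ∑ u ∈ Finset.powersetCard 2 (Finset.univ : Finset (Fin n)),
          ∏ i ∈ u, (∏ t ∈ Finset.univ.erase i, lam t) := by
  rw [esymm_compl n (n-2) (Nat.sub_le n 2) lam, Nat.sub_sub_self hn, esymm_top,
    Finset.sum_mul]
  refine Finset.sum_congr rfl fun u hu => ?_
  rw [Finset.mem_powersetCard] at hu
  obtain ⟨i, j, hij, rfl⟩ := Finset.card_eq_two.1 hu.2
  have hcompl : ({i, j} : Finset (Fin n))ᶜ = (Finset.univ.erase i).erase j := by
    rw [Finset.compl_insert, Finset.compl_singleton, Finset.erase_right_comm]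
  have hci : ∏ t ∈ Finset.univ.erase i, lam t
      = lam j * ∏ t ∈ ({i, j} : Finset (Fin n))ᶜ, lam t := by
    rw [hcompl, Finset.mul_prod_erase _ _ (Finset.mem_erase.2 ⟨hij.symm, Finset.mem_univ j⟩)]
  have hcomplj : ({i, j} : Finset (Fin n))ᶜ = (Finset.univ.erase j).erase i := by
    rw [hcompl, Finset.erase_right_comm]
  have hcj : ∏ t ∈ Finset.univ.erase j, lam t
      = lam i * ∏ t ∈ ({i, j} : Finset (Fin n))ᶜ, lam t := by
    rw [hcomplj, Finset.mul_prod_erase _ _ (Finset.mem_erase.2 ⟨hij, Finset.mem_univ i⟩)]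
  have huniv : ∏ t, lam t = (lam i * lam j) * ∏ t ∈ ({i, j} : Finset (Fin n))ᶜ, lam t := by
    rw [← Finset.prod_mul_prod_compl ({i, j} : Finset (Fin n)) lam, Finset.prod_pair hij]
  rw [Finset.prod_pair hij, hci, hcj, huniv]
  ring

open Finset in
lemma newton_top (n : ℕ) (hn : 2 ≤ n) (lam : Fin n → ℝ) :
    2 * (n : ℝ) * (esymm n (n-2) lam * esymm n n lam)
      ≤ ((n : ℝ) - 1) * (esymm n (n-1) lam)^2 := by
  set a : Fin n → ℝ := fun i => ∏ t ∈ Finset.univ.erase i, lam t with ha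
  have h3 := esymm_sub_two_mul_top n hn lam
  have h2 := esymm_pred n (le_trans one_le_two hn) lam
  have hcs : (∑ i, a i) ^ 2 ≤ (n : ℝ) * ∑ i, (a i)^2 := by
    have := sq_sum_le_card_mul_sum_sq (s := (Finset.univ : Finset (Fin n))) (f := a)
    simpa using this
  have hid : 2 * ∑ u ∈ Finset.powersetCard 2 (Finset.univ : Finset (Fin n)), ∏ i ∈ u, a i
      = (∑ i, a i)^2 - ∑ i, (a i)^2 := two_mul_sum_powersetCard_two _ _
  rw [h3, h2]
  nlinarith [hcs, hid, sq_nonneg (∑ i, a i)]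


lemma choose_rel (n i : ℕ) (hn : 1 ≤ n) (h : i ≤ n - 1) :
    ((n - i : ℕ) : ℝ) * (n.choose i : ℝ) = (n : ℝ) * (((n-1).choose i : ℕ) : ℝ) := by
  obtain ⟨m, rfl⟩ : ∃ m, n = m + 1 := ⟨n-1, by omega⟩
  simp only [Nat.add_sub_cancel]
  have hnat : (m + 1 - i) * (m+1).choose i = (m + 1) * m.choose i := by
    rw [mul_comm, ← Nat.choose_mul_succ_eq, mul_comm]
  exact_mod_cast congrArg (Nat.cast : ℕ → ℝ) hnat

theorem newton_ineq : ∀ n : ℕ, ∀ lam : Fin n → ℝ, ∀ j : ℕ, 1 ≤ j → j + 1 ≤ n →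
    (n.choose j : ℝ)^2 * (esymm n (j-1) lam * esymm n (j+1) lam)
      ≤ (n.choose (j-1) : ℝ) * (n.choose (j+1) : ℝ) * (esymm n j lam)^2 := by
  intro n
  induction n using Nat.strong_induction_on with
  | _ n ih =>
  intro lam j hj1 hjn
  rcases eq_or_lt_of_le hjn with htop | hlt
  · subst htop
    have hT := newton_top (j+1) (by omega) lam
    rw [show (j+1)-2 = j-1 from by omega, show (j+1)-1 = j from by omega] at hT
    rw [Nat.choose_succ_self_right, Nat.choose_self,
      show (j+1).choose (j-1) = (j+1).choose 2 from by
        rw [← Nat.choose_symm (show 2 ≤ j+1 by omega), show (j+1)-2 = j-1 from by omega],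
      Nat.cast_choose_two]
    push_cast at hT ⊢
    nlinarith [hT, sq_nonneg (esymm (j+1) j lam)]
  · obtain ⟨nu, hnu⟩ := deriv_step n (by omega) lam
    have IH := ih (n-1) (by omega) nu j hj1 (by omega)
    set A := esymm n (j-1) lam
    set Bb := esymm n j lam
    set D := esymm n (j+1) lam
    set a := esymm (n-1) (j-1) nu
    set b := esymm (n-1) j nu
    set d := esymm (n-1) (j+1) nu
    set c1 : ℝ := ((n - (j-1) : ℕ) : ℝ) with hc1
    set c2 : ℝ := ((n - j : ℕ) : ℝ) with hc2
    set c3 : ℝ := ((n - (j+1) : ℕ) : ℝ) with hc3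
    have r1 : (n:ℝ) * a = c1 * A := hnu (j-1) (by omega)
    have r2 : (n:ℝ) * b = c2 * Bb := hnu j (by omega)
    have r3 : (n:ℝ) * d = c3 * D := hnu (j+1) (by omega)
    set Cj : ℝ := (n.choose j : ℝ)
    set Cjm : ℝ := (n.choose (j-1) : ℝ)
    set Cjp : ℝ := (n.choose (j+1) : ℝ)
    set Cj' : ℝ := ((n-1).choose j : ℝ)
    set Cjm' : ℝ := ((n-1).choose (j-1) : ℝ)
    set Cjp' : ℝ := ((n-1).choose (j+1) : ℝ)
    have E1 : c1 * Cjm = (n:ℝ) * Cjm' := choose_rel n (j-1) (by omega) (by omega)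
    have E2 : c2 * Cj = (n:ℝ) * Cj' := choose_rel n j (by omega) (by omega)
    have E3 : c3 * Cjp = (n:ℝ) * Cjp' := choose_rel n (j+1) (by omega) (by omega)
    have pos : (0:ℝ) < c1 * c3 * c2^2 := by
      have p1 : (0:ℕ) < n - (j-1) := by omega
      have p2 : (0:ℕ) < n - j := by omega
      have p3 : (0:ℕ) < n - (j+1) := by omega
      have q1 : (0:ℝ) < c1 := by rw [hc1]; exact_mod_cast p1
      have q2 : (0:ℝ) < c2 := by rw [hc2]; exact_mod_cast p2
      have q3 : (0:ℝ) < c3 := by rw [hc3]; exact_mod_cast p3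
      positivity
    refine le_of_mul_le_mul_left ?_ pos
    have M : (n:ℝ)^4 * (Cj'^2 * (a*d)) ≤ (n:ℝ)^4 * (Cjm' * Cjp' * b^2) :=
      mul_le_mul_of_nonneg_left IH (by positivity)
    calc c1*c3*c2^2 * (Cj^2*(A*D)) = (c2*Cj)^2*((c1*A)*(c3*D)) := by ring
      _ = ((n:ℝ)*Cj')^2*(((n:ℝ)*a)*((n:ℝ)*d)) := by rw [E2, ← r1, ← r3]
      _ = (n:ℝ)^4*(Cj'^2*(a*d)) := by ring
      _ ≤ (n:ℝ)^4*(Cjm'*Cjp'*b^2) := M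
      _ = ((n:ℝ)*Cjm')*((n:ℝ)*Cjp')*((n:ℝ)*b)^2 := by ring
      _ = (c1*Cjm)*(c3*Cjp)*(c2*Bb)^2 := by rw [E1, E3, ← r2]
      _ = c1*c3*c2^2*(Cjm*Cjp*Bb^2) := by ring

lemma esymm_zero' (n : ℕ) (lam : Fin n → ℝ) : esymm n 0 lam = 1 := by simp [esymm]

lemma weak_newton (n i : ℕ) (lam : Fin n → ℝ) (h1 : 1 ≤ i) (h2 : i+1 ≤ n)
    (hnn : 0 ≤ esymm n (i-1) lam) :
    esymm n (i-1) lam * esymm n (i+1) lam ≤ ((n:ℝ)+2)^(2*n) * (esymm n i lam)^2 := by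
  rcases le_or_gt (esymm n (i+1) lam) 0 with h | h
  · exact le_trans (mul_nonpos_of_nonneg_of_nonpos hnn h) (by positivity)
  · have hN := newton_ineq n lam i h1 h2
    have c1 : (1:ℝ) ≤ (n.choose i : ℝ) := by
      exact_mod_cast Nat.one_le_iff_ne_zero.2 (Nat.choose_pos (by omega : i ≤ n)).ne'
    have c2n : n.choose (i-1) ≤ (n+2)^n :=
      le_trans (Nat.choose_le_pow _ _) (le_trans (Nat.pow_le_pow_right (by omega) (by omega))
        (Nat.pow_le_pow_left (by omega) n))
    have c3n : n.choose (i+1) ≤ (n+2)^n :=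
      le_trans (Nat.choose_le_pow _ _) (le_trans (Nat.pow_le_pow_right (by omega) (by omega))
        (Nat.pow_le_pow_left (by omega) n))
    have c2 : (n.choose (i-1) : ℝ) ≤ ((n:ℝ)+2)^n := by exact_mod_cast c2n
    have c3 : (n.choose (i+1) : ℝ) ≤ ((n:ℝ)+2)^n := by exact_mod_cast c3n
    have hBB : ((n:ℝ)+2)^(2*n) = (((n:ℝ)+2)^n)^2 := by rw [mul_comm 2 n, pow_mul]
    rw [hBB]
    have hnng : (0:ℝ) ≤ ((n:ℝ)+2)^n := by positivity
    have hprod : 0 ≤ esymm n (i-1) lam * esymm n (i+1) lam := mul_nonneg hnn h.le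
    have hsq : (1:ℝ) ≤ (n.choose i : ℝ)^2 := by nlinarith [c1]
    have hint1 : esymm n (i-1) lam * esymm n (i+1) lam
        ≤ (n.choose i : ℝ)^2 * (esymm n (i-1) lam * esymm n (i+1) lam) :=
      le_mul_of_one_le_left hprod hsq
    have hint2 : (n.choose (i-1) : ℝ) * (n.choose (i+1) : ℝ) ≤ ((n:ℝ)+2)^n * ((n:ℝ)+2)^n :=
      mul_le_mul c2 c3 (by positivity) hnng
    have hint3 := mul_le_mul_of_nonneg_right hint2 (sq_nonneg (esymm n i lam))
    nlinarith [hint1, hN, hint3]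

lemma hP_all (n k : ℕ) (lam : Fin n → ℝ)
    (hpos : ∀ j, 1 ≤ j → j ≤ k-1 → 0 < esymm n j lam) :
    ∀ i, i ≤ k-1 → 0 < esymm n i lam := by
  intro i hi
  rcases Nat.eq_zero_or_pos i with rfl | h
  · rw [esymm_zero']; norm_num
  · exact hpos i h hi

lemma chainC (n k : ℕ) (hk : 2 ≤ k) (hkn : k ≤ n) (lam : Fin n → ℝ)
    (hpos : ∀ j, 1 ≤ j → j ≤ k-1 → 0 < esymm n j lam) (hk_pos : 0 < esymm n k lam) :
    ∀ m, m ≤ k-1 →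
      esymm n k lam * esymm n (k-1-m) lam
        ≤ (((n:ℝ)+2)^(2*n))^m * (esymm n (k-1) lam * esymm n (k-m) lam) := by
  have hP := hP_all n k lam hpos
  intro m
  induction m with
  | zero => intro _; simp only [Nat.sub_zero, pow_zero, one_mul]; exact le_of_eq (by ring)
  | succ m ihm =>
    intro hm
    have IH := ihm (by omega)
    set B : ℝ := ((n:ℝ)+2)^(2*n) with hBdef
    have hB0 : (0:ℝ) ≤ B := by positivity
    have hWN := weak_newton n (k-1-m) lam (by omega) (by omega : (k-1-m)+1 ≤ n)
      (le_of_lt (hP (k-1-m-1) (by omega)))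
    rw [show k-1-m-1 = k-1-(m+1) from by omega, show k-1-m+1 = k-m from by omega] at hWN
    have hPkm : 0 < esymm n (k-m) lam := by
      rcases Nat.eq_zero_or_pos m with rfl | hm0
      · simpa using hk_pos
      · exact hP (k-m) (by omega)
    rw [show k-(m+1) = k-1-m from by omega]
    refine le_of_mul_le_mul_right ?_ hPkm
    have h1 : esymm n k lam * (esymm n (k-1-(m+1)) lam * esymm n (k-m) lam)
        ≤ esymm n k lam * (B * esymm n (k-1-m) lam ^2) :=
      mul_le_mul_of_nonneg_left hWN hk_pos.le
    have h2 : (B * esymm n (k-1-m) lam) * (esymm n k lam * esymm n (k-1-m) lam)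
        ≤ (B * esymm n (k-1-m) lam) * (B^m * (esymm n (k-1) lam * esymm n (k-m) lam)) :=
      mul_le_mul_of_nonneg_left IH (mul_nonneg hB0 (hP (k-1-m) (by omega)).le)
    calc esymm n k lam * esymm n (k-1-(m+1)) lam * esymm n (k-m) lam
        = esymm n k lam * (esymm n (k-1-(m+1)) lam * esymm n (k-m) lam) := by ring
      _ ≤ esymm n k lam * (B * esymm n (k-1-m) lam ^2) := h1
      _ = (B * esymm n (k-1-m) lam) * (esymm n k lam * esymm n (k-1-m) lam) := by ring
      _ ≤ (B * esymm n (k-1-m) lam) * (B^m * (esymm n (k-1) lam * esymm n (k-m) lam)) := h2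
      _ = B^(m+1) * (esymm n (k-1) lam * esymm n (k-1-m) lam) * esymm n (k-m) lam := by ring

lemma chainD (n k : ℕ) (hk : 2 ≤ k) (hkn : k ≤ n) (lam : Fin n → ℝ)
    (hpos : ∀ j, 1 ≤ j → j ≤ k-1 → 0 < esymm n j lam) (hk_pos : 0 < esymm n k lam) :
    ∀ m, m ≤ k-1 →
      esymm n k lam ^ m * esymm n (k-1-m) lam
        ≤ (((n:ℝ)+2)^(2*n))^(m*m) * (esymm n (k-1) lam)^(m+1) := by
  have hP := hP_all n k lam hpos
  intro m
  induction m with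
  | zero => intro _; simp
  | succ m ihm =>
    intro hm
    set B : ℝ := ((n:ℝ)+2)^(2*n) with hBdef
    have hB0 : (0:ℝ) ≤ B := by positivity
    have hB1 : (1:ℝ) ≤ B := one_le_pow₀ (by linarith [(Nat.cast_nonneg n : (0:ℝ) ≤ n)])
    have hC := chainC n k hk hkn lam hpos hk_pos (m+1) hm
    rw [show k-(m+1) = k-1-m from by omega] at hC
    have step1 : esymm n k lam ^ (m+1) * esymm n (k-1-(m+1)) lam
        = esymm n k lam ^ m * (esymm n k lam * esymm n (k-1-(m+1)) lam) := by ring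
    have step2 : esymm n k lam ^ m * (esymm n k lam * esymm n (k-1-(m+1)) lam)
        ≤ esymm n k lam ^ m * (B^(m+1) * (esymm n (k-1) lam * esymm n (k-1-m) lam)) :=
      mul_le_mul_of_nonneg_left hC (pow_nonneg hk_pos.le m)
    have step3 : esymm n k lam ^ m * (B^(m+1) * (esymm n (k-1) lam * esymm n (k-1-m) lam))
        = (B^(m+1) * esymm n (k-1) lam) * (esymm n k lam ^ m * esymm n (k-1-m) lam) := by ring
    have step4 : (B^(m+1) * esymm n (k-1) lam) * (esymm n k lam ^ m * esymm n (k-1-m) lam)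
        ≤ (B^(m+1) * esymm n (k-1) lam) * (B^(m*m) * (esymm n (k-1) lam)^(m+1)) :=
      mul_le_mul_of_nonneg_left (ihm (by omega))
        (mul_nonneg (by positivity) (hP (k-1) le_rfl).le)
    have step5 : (B^(m+1) * esymm n (k-1) lam) * (B^(m*m) * (esymm n (k-1) lam)^(m+1))
        = B^(m*m+m+1) * (esymm n (k-1) lam)^(m+2) := by ring
    have step6 : B^(m*m+m+1) ≤ B^((m+1)*(m+1)) := by
      apply pow_le_pow_right₀ hB1
      have e : (m+1)*(m+1) = m*m+2*m+1 := by ring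
      omega
    calc esymm n k lam ^ (m+1) * esymm n (k-1-(m+1)) lam
        ≤ (B^(m+1) * esymm n (k-1) lam) * (esymm n k lam ^ m * esymm n (k-1-m) lam) := by
          rw [step1, ← step3]; exact step2
      _ ≤ B^(m*m+m+1) * (esymm n (k-1) lam)^(m+2) := by rw [← step5]; exact step4
      _ ≤ B^((m+1)*(m+1)) * (esymm n (k-1) lam)^(m+2) :=
          mul_le_mul_of_nonneg_right step6 (pow_nonneg (hP (k-1) le_rfl).le (m+2))
      _ = B^((m+1)*(m+1)) * (esymm n (k-1) lam)^(m+1+1) := by ring_nf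

/-- Lemma 2.13, inequality (2.9): there is `C > 0` depending only on `n, k` such
that whenever `λ ∈ Γ_{k-1}` solves the equation
`σ_k/σ_{k-1} = ∑_{l=0}^{k-2} β_l σ_l/σ_{k-1} + β_{k-1}` with `β_0, …, β_{k-2} ≥ 0`,
then each ratio `σ_l/σ_{k-1}` with `β_l > 0` is positive and bounded by
`max ((1 + |β_{k-1}|)/β_l) C`. -/
theorem ratio_bound (n k : ℕ) (hn : 2 ≤ n) (hk : 2 ≤ k) (hkn : k ≤ n) :
    ∃ C > (0 : ℝ), ∀ lam ∈ GammaCone n (k - 1), ∀ β : ℕ → ℝ,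
      (∀ l ≤ k - 2, 0 ≤ β l) → ∀ βlast : ℝ,
      esymm n k lam / esymm n (k - 1) lam
          = (∑ l ∈ Finset.range (k - 1), β l * (esymm n l lam / esymm n (k - 1) lam))
            + βlast →
      ∀ l ≤ k - 2, 0 < β l →
        0 < esymm n l lam / esymm n (k - 1) lam ∧
        esymm n l lam / esymm n (k - 1) lam ≤ max ((1 + |βlast|) / β l) C := by
  set B : ℝ := ((n:ℝ)+2)^(2*n) with hBdef
  have hB0 : (0:ℝ) < B := by positivity
  have hB1 : (1:ℝ) ≤ B := one_le_pow₀ (by linarith [(Nat.cast_nonneg n : (0:ℝ) ≤ n)])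
  refine ⟨B^(n*n), by positivity, ?_⟩
  intro lam hlam β hβ βlast heq l hl hβl
  have hcone : ∀ j, 1 ≤ j → j ≤ k-1 → 0 < esymm n j lam := hlam
  have hP := hP_all n k lam hcone
  have hs : 0 < esymm n (k-1) lam := hP (k-1) le_rfl
  have hrl : 0 < esymm n l lam / esymm n (k-1) lam := div_pos (hP l (by omega)) hs
  refine ⟨hrl, ?_⟩
  rcases le_or_gt (esymm n k lam) (esymm n (k-1) lam) with hcase | hcase
  · -- σ_k ≤ σ_{k-1}
    have hterm : β l * (esymm n l lam / esymm n (k-1) lam)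
        ≤ ∑ m ∈ Finset.range (k-1), β m * (esymm n m lam / esymm n (k-1) lam) := by
      refine Finset.single_le_sum (f := fun m => β m * (esymm n m lam / esymm n (k-1) lam))
        (fun m hm => ?_) ?_
      · have hm' : m ≤ k - 2 := by have := Finset.mem_range.1 hm; omega
        exact mul_nonneg (hβ m hm') (div_pos (hP m (by omega)) hs).le
      · exact Finset.mem_range.2 (by omega)
    have hdiv : esymm n k lam / esymm n (k-1) lam ≤ 1 := (div_le_one hs).2 hcase
    have hub : β l * (esymm n l lam / esymm n (k-1) lam) ≤ 1 + |βlast| := by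
      have h2 : ∑ m ∈ Finset.range (k-1), β m * (esymm n m lam / esymm n (k-1) lam)
          = esymm n k lam / esymm n (k-1) lam - βlast := by linarith [heq]
      have h3 := neg_abs_le βlast
      linarith [hterm, hdiv, h2]
    have : esymm n l lam / esymm n (k-1) lam ≤ (1 + |βlast|) / β l :=
      (le_div_iff₀ hβl).2 (by linarith [hub, mul_comm (β l) (esymm n l lam / esymm n (k-1) lam)])
    exact le_trans this (le_max_left _ _)
  · -- σ_k > σ_{k-1}
    have hkpos : 0 < esymm n k lam := lt_trans hs hcase
    have hD := chainD n k hk hkn lam hcone hkpos (k-1-l) (by omega)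
    rw [show k-1-(k-1-l) = l from by omega] at hD
    set m := k-1-l with hmdef
    have hmono : esymm n (k-1) lam ^ m ≤ esymm n k lam ^ m :=
      pow_le_pow_left₀ hs.le hcase.le m
    have h1 : esymm n (k-1) lam ^ m * esymm n l lam
        ≤ (B^(m*m) * esymm n (k-1) lam) * esymm n (k-1) lam ^ m := by
      calc esymm n (k-1) lam ^ m * esymm n l lam ≤ esymm n k lam ^ m * esymm n l lam :=
            mul_le_mul_of_nonneg_right hmono (hP l (by omega)).le
        _ ≤ B^(m*m) * (esymm n (k-1) lam)^(m+1) := hD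
        _ = (B^(m*m) * esymm n (k-1) lam) * esymm n (k-1) lam ^ m := by ring
    have h2 : esymm n l lam ≤ B^(m*m) * esymm n (k-1) lam := by
      have hpow : (0:ℝ) < esymm n (k-1) lam ^ m := pow_pos hs m
      refine le_of_mul_le_mul_right ?_ hpow
      calc esymm n l lam * esymm n (k-1) lam ^ m
          = esymm n (k-1) lam ^ m * esymm n l lam := by ring
        _ ≤ (B^(m*m) * esymm n (k-1) lam) * esymm n (k-1) lam ^ m := h1
    have h3 : esymm n l lam / esymm n (k-1) lam ≤ B^(m*m) :=
      (div_le_iff₀ hs).2 (by linarith [h2])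
    have h4 : B^(m*m) ≤ B^(n*n) :=
      pow_le_pow_right₀ hB1 (Nat.mul_le_mul (show m ≤ n by omega) (show m ≤ n by omega))
    exact le_trans (le_trans h3 h4) (le_max_right _ _)
end
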